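/- arXiv:2412.01780 — 5 statements merged into one kernel-verified Lean document; each statement's English description precedes it below -/
import Mathlib

section
/- Let F(x) = (1/2) xᵀ A x be a quadratic form in s variables with integral symmetric Hessian matrix A having even diagonal entries, and let L be the smallest positive integer with L·A⁻¹ integral. For integers d, q with q > 0 and gcd(d,q) = 1, and any r ∈ Z^s, the Gauss sum G(d, q; r) = Σ_{h ∈ (Z/qZ)^s} e((d·F(h) + h·r)/q) satisfies |G(d,q;r)| ≤ (gcd(L,q))^{s/2} · q^{s/2}. -/
open scoped BigOperators

/-- `e x = e^{2πix}`. -/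
noncomputable def e (x : ℝ) : ℂ := Complex.exp (2 * (Real.pi : ℂ) * Complex.I * (x : ℂ))


lemma e_add (x y : ℝ) : e (x + y) = e x * e y := by
  simp only [e, ← Complex.exp_add, Complex.ofReal_add]; ring_nf

lemma e_int (n : ℤ) : e n = 1 := by
  have := Complex.exp_int_mul_two_pi_mul_I n
  rw [e, ← this]
  push_cast
  ring_nf

lemma e_abs (x : ℝ) : ‖e x‖ = 1 := by
  rw [e, Complex.norm_exp]
  simp [Complex.mul_re]

noncomputable def chi (q : ℕ) (n : ℤ) : ℂ := e ((n : ℝ) / q)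

lemma chi_add (q : ℕ) (a b : ℤ) : chi q (a + b) = chi q a * chi q b := by
  rw [chi, chi, chi, ← e_add]; push_cast; ring_nf

lemma chi_zero (q : ℕ) : chi q 0 = 1 := by simp [chi, e]

lemma chi_dvd (q : ℕ) (hq : 0 < q) (n : ℤ) (h : (q:ℤ) ∣ n) : chi q n = 1 := by
  obtain ⟨k, rfl⟩ := h
  have hq' : (q:ℝ) ≠ 0 := by positivity
  rw [chi]
  have : ((q * k : ℤ) : ℝ) / q = (k : ℝ) := by push_cast; field_simp
  rw [this]
  exact_mod_cast e_int k

lemma chi_eq_of_dvd (q : ℕ) (hq : 0 < q) (m n : ℤ) (h : (q:ℤ) ∣ m - n) : chi q m = chi q n := by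
  have : m = n + (m - n) := by ring
  rw [this, chi_add, chi_dvd q hq _ h, mul_one]

lemma chi_neg (q : ℕ) (n : ℤ) : chi q (-n) = (starRingEnd ℂ) (chi q n) := by
  rw [chi, chi, e, e, ← Complex.exp_conj]
  congr 1
  simp [map_mul, map_ofNat, Complex.conj_I, Complex.conj_ofReal]
  push_cast
  ring

lemma chi_abs (q : ℕ) (n : ℤ) : ‖chi q n‖ = 1 := e_abs _

lemma chi_pow (q : ℕ) (m : ℤ) (t : ℕ) : chi q (m * t) = chi q m ^ t := by
  induction t with
  | zero => simp [chi_zero]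
  | succ n ih => push_cast; rw [mul_add, chi_add, ih, mul_one, pow_succ]

lemma chi_geom (q : ℕ) (hq : 0 < q) (m : ℤ) :
    ∑ t ∈ Finset.range q, chi q (m * t) = if (q:ℤ) ∣ m then (q:ℂ) else 0 := by
  by_cases h : (q:ℤ) ∣ m
  · simp only [h, if_true]
    calc ∑ t ∈ Finset.range q, chi q (m * t) = ∑ _t ∈ Finset.range q, (1:ℂ) :=
          Finset.sum_congr rfl (fun t _ => chi_dvd q hq _ (h.mul_right t))
      _ = (q:ℂ) := by simp
  · simp only [h, if_false]
    have hne : chi q m ≠ 1 := by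
      intro hc
      rw [chi, e, Complex.exp_eq_one_iff] at hc
      obtain ⟨n, hn⟩ := hc
      have hpi : (2 * (Real.pi:ℂ) * Complex.I) ≠ 0 := by
        simp [Real.pi_ne_zero, Complex.I_ne_zero]
      have h2 : (((m:ℝ)/(q:ℝ) : ℝ) : ℂ) = (n : ℂ) := by
        apply mul_left_cancel₀ hpi
        rw [hn]; ring
      have hq' : (q:ℝ) ≠ 0 := by positivity
      have h3 : (m : ℝ) = (n : ℝ) * q := by
        have := congrArg Complex.re h2
        simp at this
        field_simp at this
        linarith
      have h4 : m = n * q := by exact_mod_cast h3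
      exact h ⟨n, by rw [h4, mul_comm]⟩
    have hpow : chi q m ^ q = 1 := by
      rw [← chi_pow, chi_dvd q hq _ ⟨m, by ring⟩]
    calc ∑ t ∈ Finset.range q, chi q (m * t) = ∑ t ∈ Finset.range q, chi q m ^ t :=
          Finset.sum_congr rfl (fun t _ => chi_pow q m t)
      _ = (chi q m ^ q - 1) / (chi q m - 1) := geom_sum_eq hne q
      _ = 0 := by rw [hpow]; simp

lemma chi_sum (q : ℕ) {ι : Type*} (t : Finset ι) (f : ι → ℤ) :
    chi q (∑ i ∈ t, f i) = ∏ i ∈ t, chi q (f i) := by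
  classical
  induction t using Finset.cons_induction with
  | empty => simp [chi_zero]
  | cons a t ha ih => rw [Finset.sum_cons, Finset.prod_cons, chi_add, ih]

section QF
variable {s : ℕ} (A : Matrix (Fin s) (Fin s) ℤ)

def Tq (a : Fin s → ℤ) : ℤ := ∑ i, ∑ j, a i * A i j * a j
def Bq (a b : Fin s → ℤ) : ℤ := ∑ i, ∑ j, a i * A i j * b j
def Fq (a : Fin s → ℤ) : ℤ := Tq A a / 2
def Nq (d : ℤ) (r : Fin s → ℤ) (a : Fin s → ℤ) : ℤ := d * Fq A a + ∑ i, a i * r i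

lemma T_even (hA : A.IsSymm) (hdiag : ∀ i, 2 ∣ A i i) (a : Fin s → ℤ) : 2 ∣ Tq A a := by
  have key : ((Tq A a : ℤ) : ZMod 2) = 0 := by
    push_cast [Tq]
    rw [← Finset.sum_product']
    apply Finset.sum_ninvolution Prod.swap
    · intro p
      have hsym : (A p.2 p.1 : ZMod 2) = (A p.1 p.2 : ZMod 2) := by
        congr 1
        conv_rhs => rw [← hA]
        rfl
      simp only [Prod.fst_swap, Prod.snd_swap]
      rw [hsym]
      have : ∀ x y z : ZMod 2, x * z * y + y * z * x = 0 := by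
        intro x y z
        have h2 : x * z * y + y * z * x = (x * z * y) + (x * z * y) := by ring
        rw [h2, CharTwo.add_self_eq_zero]
      exact this _ _ _
    · intro p hf hswap
      apply hf
      have h12 : p.2 = p.1 := congrArg Prod.fst hswap
      have hz : ((A p.1 p.2 : ℤ) : ZMod 2) = 0 := by
        rw [h12]
        exact (ZMod.intCast_zmod_eq_zero_iff_dvd (A p.1 p.1) 2).mpr (hdiag p.1)
      rw [hz, mul_zero, zero_mul]
    · intro p; simp
    · intro p; simp
  exact (ZMod.intCast_zmod_eq_zero_iff_dvd _ 2).mp key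

end QF

section QF2
variable {s : ℕ} (A : Matrix (Fin s) (Fin s) ℤ)

lemma two_mul_F (hA : A.IsSymm) (hdiag : ∀ i, 2 ∣ A i i) (a : Fin s → ℤ) : 2 * Fq A a = Tq A a :=
  Int.mul_ediv_cancel' (T_even A hA hdiag a)

lemma Bq_symm (hA : A.IsSymm) (a b : Fin s → ℤ) : Bq A a b = Bq A b a := by
  rw [Bq, Bq, Finset.sum_comm]
  apply Finset.sum_congr rfl; intro i _
  apply Finset.sum_congr rfl; intro j _
  have : A j i = A i j := by
    conv_rhs => rw [← hA]
    rfl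
  rw [this]; ring

lemma addT (hA : A.IsSymm) (a b : Fin s → ℤ) :
    Tq A (a + b) = Tq A a + Tq A b + 2 * Bq A a b := by
  have key := Bq_symm A hA b a
  simp only [Tq, Bq, Pi.add_apply] at *
  calc ∑ i, ∑ j, (a i + b i) * A i j * (a j + b j)
      = ∑ i, ∑ j, (a i * A i j * a j + b i * A i j * b j
          + a i * A i j * b j + b i * A i j * a j) := by
        apply Finset.sum_congr rfl; intro i _
        apply Finset.sum_congr rfl; intro j _
        ring
    _ = (∑ i, ∑ j, a i * A i j * a j) + (∑ i, ∑ j, b i * A i j * b j)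
          + (∑ i, ∑ j, a i * A i j * b j) + (∑ i, ∑ j, b i * A i j * a j) := by
        simp only [Finset.sum_add_distrib]
    _ = _ := by rw [key]; ring

lemma addF (hA : A.IsSymm) (hdiag : ∀ i, 2 ∣ A i i) (a b : Fin s → ℤ) :
    Fq A (a + b) = Fq A a + Fq A b + Bq A a b := by
  apply mul_left_cancel₀ (two_ne_zero (α := ℤ))
  rw [two_mul_F A hA hdiag, addT A hA, mul_add, mul_add, two_mul_F A hA hdiag,
    two_mul_F A hA hdiag]

lemma F_smul (hA : A.IsSymm) (hdiag : ∀ i, 2 ∣ A i i) (c : ℤ) (a : Fin s → ℤ) : Fq A (fun i => c * a i) = c ^ 2 * Fq A a := by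
  apply mul_left_cancel₀ (two_ne_zero (α := ℤ))
  rw [two_mul_F A hA hdiag]
  have h1 : Tq A (fun i => c * a i) = c ^ 2 * Tq A a := by
    simp only [Tq, Finset.mul_sum]
    apply Finset.sum_congr rfl; intro i _
    apply Finset.sum_congr rfl; intro j _
    ring
  rw [h1, ← two_mul_F A hA hdiag a]; ring

lemma B_smul_right (c : ℤ) (a b : Fin s → ℤ) :
    Bq A a (fun i => c * b i) = c * Bq A a b := by
  simp only [Bq, Finset.mul_sum]
  apply Finset.sum_congr rfl; intro i _
  apply Finset.sum_congr rfl; intro j _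
  ring

lemma addN (hA : A.IsSymm) (hdiag : ∀ i, 2 ∣ A i i) (d : ℤ) (r : Fin s → ℤ) (a b : Fin s → ℤ) :
    Nq A d r (a + b) = Nq A d r a + Nq A d r b + d * Bq A a b := by
  simp only [Nq, addF A hA hdiag, Pi.add_apply, add_mul, Finset.sum_add_distrib]
  ring

lemma N_cong (hA : A.IsSymm) (hdiag : ∀ i, 2 ∣ A i i) (d : ℤ) (r : Fin s → ℤ) (q : ℕ) (a b : Fin s → ℤ)
    (h : ∀ i, (q : ℤ) ∣ a i - b i) : (q : ℤ) ∣ Nq A d r a - Nq A d r b := by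
  set δ : Fin s → ℤ := fun i => (a i - b i) / (q : ℤ) with hδ
  have ha : a = b + fun i => (q : ℤ) * δ i := by
    funext i
    simp only [Pi.add_apply, hδ]
    rw [Int.mul_ediv_cancel' (h i)]
    ring
  rw [ha, addN A hA hdiag]
  have h1 : Nq A d r (fun i => (q:ℤ) * δ i) = d * ((q:ℤ)^2 * Fq A δ) + ∑ i, (q:ℤ) * δ i * r i := by
    rw [Nq, F_smul A hA hdiag]
  have h2 : Bq A b (fun i => (q:ℤ) * δ i) = (q:ℤ) * Bq A b δ := B_smul_right A (q:ℤ) b δ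
  rw [h1, h2]
  have h3 : ∑ i, (q:ℤ) * δ i * r i = (q:ℤ) * ∑ i, δ i * r i := by
    rw [Finset.mul_sum]; apply Finset.sum_congr rfl; intros; ring
  rw [h3]
  refine ⟨d * ((q:ℤ) * Fq A δ) + ∑ i, δ i * r i + d * Bq A b δ, by ring⟩

end QF2

lemma count_multiples (q L : ℕ) (hq : 0 < q) (hL : 0 < L) :
    ((Finset.range q).filter (fun t => q ∣ L * t)).card = Nat.gcd L q := by
  set g := Nat.gcd L q with hg
  have hg0 : 0 < g := Nat.gcd_pos_of_pos_left q hL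
  have hgq : g ∣ q := Nat.gcd_dvd_right L q
  have hgL : g ∣ L := Nat.gcd_dvd_left L q
  set m := q / g with hm
  have hmg : m * g = q := Nat.div_mul_cancel hgq
  have hm0 : 0 < m := Nat.div_pos (Nat.le_of_dvd hq hgq) hg0
  have hcop : Nat.Coprime (L / g) (q / g) := Nat.coprime_div_gcd_div_gcd hg0
  have hcond : ∀ t : ℕ, (q ∣ L * t ↔ m ∣ t) := by
    intro t
    constructor
    · intro h
      have h1 : g * m ∣ g * ((L / g) * t) := by
        rw [mul_comm g m, hmg]
        have : g * ((L / g) * t) = L * t := by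
          rw [← mul_assoc, Nat.mul_div_cancel' hgL]
        rw [this]; exact h
      have h2 : m ∣ (L / g) * t := (Nat.mul_dvd_mul_iff_left hg0).mp h1
      exact (Nat.Coprime.dvd_of_dvd_mul_left (Nat.Coprime.symm hcop) h2)
    · rintro ⟨c, rfl⟩
      refine ⟨(L / g) * c, ?_⟩
      calc L * (m * c) = (g * (L / g)) * (m * c) := by rw [Nat.mul_div_cancel' hgL]
        _ = (m * g) * ((L / g) * c) := by ring
        _ = q * ((L / g) * c) := by rw [hmg]
  have himg : (Finset.range q).filter (fun t => q ∣ L * t) =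
      (Finset.range g).image (fun a => a * m) := by
    ext t
    simp only [Finset.mem_filter, Finset.mem_range, Finset.mem_image, hcond]
    constructor
    · rintro ⟨htq, c, rfl⟩
      refine ⟨c, ?_, (mul_comm m c).symm⟩
      have h5 : m * c < m * g := hmg.symm ▸ htq
      exact Nat.lt_of_mul_lt_mul_left h5
    · rintro ⟨a, ha, rfl⟩
      refine ⟨?_, ⟨a, mul_comm a m⟩⟩
      calc a * m < g * m := (Nat.mul_lt_mul_right hm0).mpr ha
        _ = q := by rw [mul_comm g m]; exact hmg
  rw [himg, Finset.card_image_of_injective _ (mul_left_injective₀ (Nat.pos_iff_ne_zero.mp hm0)),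
    Finset.card_range]

lemma L_dvd {s : ℕ} (A : Matrix (Fin s) (Fin s) ℤ) (hdet : A.det ≠ 0) (L : ℕ)
    (hLB : ∀ i j, ∃ z : ℤ, (L : ℚ) * (((A.map (Int.cast : ℤ → ℚ))⁻¹) i j) = (z : ℚ))
    (q : ℕ) (v : Fin s → ℤ) (hv : ∀ j, (q:ℤ) ∣ ∑ l, A j l * v l) :
    ∀ i, (q:ℤ) ∣ (L:ℤ) * v i := by
  classical
  set Aq : Matrix (Fin s) (Fin s) ℚ := A.map (Int.cast : ℤ → ℚ) with hAq
  have hmapeq : Aq = (Int.castRingHom ℚ).mapMatrix A := rfl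
  have hdetq : IsUnit Aq.det := by
    have h1 : Aq.det = ((A.det : ℤ) : ℚ) := by
      rw [hmapeq, ← RingHom.map_det]
      rfl
    rw [h1]
    simpa using (isUnit_iff_ne_zero.mpr (by exact_mod_cast hdet : ((A.det : ℚ)) ≠ 0))
  have hinv : Aq⁻¹ * Aq = 1 := Matrix.nonsing_inv_mul Aq hdetq
  set B : Matrix (Fin s) (Fin s) ℤ := Matrix.of (fun i j => (hLB i j).choose) with hBdef
  have hB : ∀ i j, ((B i j : ℤ) : ℚ) = (L : ℚ) * (Aq⁻¹ i j) := by
    intro i j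
    exact ((hLB i j).choose_spec).symm
  have hBA : B * A = (L : ℤ) • (1 : Matrix (Fin s) (Fin s) ℤ) := by
    apply Matrix.ext
    intro i j
    have : (((B * A) i j : ℤ) : ℚ) = ((((L : ℤ) • (1 : Matrix (Fin s) (Fin s) ℤ)) i j : ℤ) : ℚ) := by
      have lhs : (((B * A) i j : ℤ) : ℚ) = ∑ l, ((B i l : ℤ) : ℚ) * ((A l j : ℤ) : ℚ) := by
        simp [Matrix.mul_apply]
      have rhs : ((L : ℚ) * ((Aq⁻¹ * Aq) i j)) = ∑ l, ((B i l : ℤ) : ℚ) * ((A l j : ℤ) : ℚ) := by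
        rw [Matrix.mul_apply, Finset.mul_sum]
        apply Finset.sum_congr rfl
        intro l _
        rw [hB i l]
        have : Aq l j = ((A l j : ℤ) : ℚ) := rfl
        rw [this]
        ring
      rw [lhs, ← rhs, hinv]
      by_cases hij : i = j <;> simp [hij, Matrix.one_apply, Matrix.smul_apply]
    exact_mod_cast this
  intro i
  have hkey : (L : ℤ) * v i = ∑ j, B i j * (∑ l, A j l * v l) := by
    have h1 : B.mulVec (A.mulVec v) = ((L : ℤ) • v) := by
      rw [Matrix.mulVec_mulVec, hBA, Matrix.smul_mulVec, Matrix.one_mulVec]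
    have h2 := congrFun h1 i
    simp only [Matrix.mulVec, dotProduct, Pi.smul_apply, smul_eq_mul] at h2
    rw [← h2]
  rw [hkey]
  exact Finset.dvd_sum (fun j _ => ((hv j).mul_left (B i j)))

lemma mod_aux (q a b : ℕ) : (a % q + b) % q = (a + b) % q :=
  Nat.ModEq.add_right b (Nat.mod_modEq a q)

/-- Bound for the Gauss sum `G(d,q;r) = Σ_{h ∈ (Z/qZ)^s} e((d·F(h) + h·r)/q)` attached to an
integral quadratic form `F(x) = (1/2) xᵀ A x` (A symmetric with even diagonal), where `L` is the
least positive integer such that `L·A⁻¹` is integral: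
`|G(d,q;r)| ≤ gcd(L,q)^{s/2} q^{s/2}` whenever `gcd(d,q) = 1`. -/
theorem gauss_sum_bound (s : ℕ) (A : Matrix (Fin s) (Fin s) ℤ) (hA : A.IsSymm)
    (hdiag : ∀ i, 2 ∣ A i i) (hdet : A.det ≠ 0)
    (L : ℕ)
    (hL : IsLeast {L' : ℕ | 0 < L' ∧ ∀ i j, ∃ z : ℤ,
      (L' : ℚ) * (((A.map (Int.cast : ℤ → ℚ))⁻¹) i j) = (z : ℚ)} L)
    (d : ℤ) (q : ℕ) (hq : 0 < q) (hdq : Int.gcd d q = 1) (r : Fin s → ℤ) :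
    ‖(∑ h ∈ Fintype.piFinset (fun _ : Fin s => Finset.range q),
        e (((((d : ℚ) * ((∑ i, ∑ j, (h i : ℚ) * (A i j : ℚ) * (h j : ℚ)) / 2)
          + ∑ i, (h i : ℚ) * (r i : ℚ)) / (q : ℚ) : ℚ) : ℝ)))‖
      ≤ (Nat.gcd L q : ℝ) ^ ((s : ℝ) / 2) * (q : ℝ) ^ ((s : ℝ) / 2) := by
  classical
  set P := Fintype.piFinset (fun _ : Fin s => Finset.range q) with hP
  -- Step 1 : rewrite summands via chi
  have step1 : ∀ h : Fin s → ℕ,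
      e (((((d : ℚ) * ((∑ i, ∑ j, (h i : ℚ) * (A i j : ℚ) * (h j : ℚ)) / 2)
          + ∑ i, (h i : ℚ) * (r i : ℚ)) / (q : ℚ) : ℚ) : ℝ))
        = chi q (Nq A d r (fun i => (h i : ℤ))) := by
    intro h
    rw [chi]
    congr 1
    have hT : ((Tq A (fun i => (h i : ℤ)) : ℤ) : ℚ)
        = ∑ i, ∑ j, (h i : ℚ) * (A i j : ℚ) * (h j : ℚ) := by
      rw [Tq]; push_cast; rfl
    have hF2 : 2 * ((Fq A (fun i => (h i : ℤ)) : ℤ) : ℚ)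
        = ((Tq A (fun i => (h i : ℤ)) : ℤ) : ℚ) := by
      have := two_mul_F A hA hdiag (fun i => (h i : ℤ))
      exact_mod_cast congrArg (fun z : ℤ => (z : ℚ)) this
    have hNq : ((Nq A d r (fun i => (h i : ℤ)) : ℤ) : ℚ)
        = (d : ℚ) * ((Fq A (fun i => (h i : ℤ)) : ℤ) : ℚ) + ∑ i, (h i : ℚ) * (r i : ℚ) := by
      rw [Nq]; push_cast; rfl
    have hQ : ((d : ℚ) * ((∑ i, ∑ j, (h i : ℚ) * (A i j : ℚ) * (h j : ℚ)) / 2)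
          + ∑ i, (h i : ℚ) * (r i : ℚ)) / (q : ℚ)
        = ((Nq A d r (fun i => (h i : ℤ)) : ℤ) : ℚ) / (q : ℚ) := by
      rw [hNq, ← hT, ← hF2]
      ring
    rw [hQ]
    push_cast
    ring
  rw [Finset.sum_congr rfl (fun h _ => step1 h)]
  set G := ∑ h ∈ P, chi q (Nq A d r (fun i => (h i : ℤ))) with hG
  -- the divisibility condition
  set cond : (Fin s → ℕ) → Prop := fun g => ∀ i, (q:ℤ) ∣ ∑ l, A i l * (g l : ℤ) with hcond
  -- Step 3 : expand |G|^2
  have expand : G * (starRingEnd ℂ) G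
      = ∑ k ∈ P, ∑ h ∈ P, chi q (Nq A d r (fun i => (h i : ℤ)) - Nq A d r (fun i => (k i : ℤ))) := by
    rw [mul_comm, hG, map_sum, Finset.sum_mul_sum]
    apply Finset.sum_congr rfl; intro k _
    apply Finset.sum_congr rfl; intro h _
    rw [← chi_neg, ← chi_add]
    congr 1
    ring
  -- Step 4 : reindex inner sum
  have reindex : ∀ k ∈ P,
      (∑ h ∈ P, chi q (Nq A d r (fun i => (h i : ℤ)) - Nq A d r (fun i => (k i : ℤ))))
      = ∑ g ∈ P, chi q (Nq A d r (fun i => (g i : ℤ))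
          + d * Bq A (fun i => (k i : ℤ)) (fun i => (g i : ℤ))) := by
    intro k hk
    have hkm : ∀ i, k i < q := fun i => Finset.mem_range.mp (Fintype.mem_piFinset.mp hk i)
    apply Finset.sum_nbij' (i := fun h => fun i => (h i + (q - k i)) % q)
      (j := fun g => fun i => (g i + k i) % q)
    · intro h hh
      rw [Fintype.mem_piFinset]; intro i
      exact Finset.mem_range.mpr (Nat.mod_lt _ hq)
    · intro g hgm
      rw [Fintype.mem_piFinset]; intro i
      exact Finset.mem_range.mpr (Nat.mod_lt _ hq)
    · intro h hh
      funext i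
      have h1 : h i < q := Finset.mem_range.mp (Fintype.mem_piFinset.mp hh i)
      have h2 : k i < q := hkm i
      show ((h i + (q - k i)) % q + k i) % q = h i
      rw [mod_aux]
      have h3 : h i + (q - k i) + k i = h i + q := by omega
      rw [h3, Nat.add_mod_right, Nat.mod_eq_of_lt h1]
    · intro g hgm
      funext i
      have h1 : g i < q := Finset.mem_range.mp (Fintype.mem_piFinset.mp hgm i)
      have h2 : k i < q := hkm i
      show ((g i + k i) % q + (q - k i)) % q = g i
      rw [mod_aux]
      have h3 : g i + k i + (q - k i) = g i + q := by omega
      rw [h3, Nat.add_mod_right, Nat.mod_eq_of_lt h1]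
    · intro h hh
      set g : Fin s → ℕ := fun i => (h i + (q - k i)) % q with hgdef
      have hcong : ∀ i, (q:ℤ) ∣ (fun i => (h i : ℤ)) i
          - ((fun i => (k i : ℤ)) + (fun i => (g i : ℤ))) i := by
        intro i
        have h1 : h i < q := Finset.mem_range.mp (Fintype.mem_piFinset.mp hh i)
        have h2 : k i < q := hkm i
        set t := (h i + (q - k i)) / q with ht
        have e1 : q * t + (h i + (q - k i)) % q = h i + (q - k i) := Nat.div_add_mod _ q
        have e2 := congrArg (fun n : ℕ => (n : ℤ)) e1
        push_cast [Nat.cast_sub h2.le] at e2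
        refine ⟨(t : ℤ) - 1, ?_⟩
        simp only [Pi.add_apply, hgdef]
        push_cast [Nat.cast_sub h2.le]
        linarith
      have hd1 : (q:ℤ) ∣ Nq A d r (fun i => (h i : ℤ))
          - Nq A d r ((fun i => (k i : ℤ)) + (fun i => (g i : ℤ))) :=
        N_cong A hA hdiag d r q _ _ hcong
      have hd2 : Nq A d r ((fun i => (k i : ℤ)) + (fun i => (g i : ℤ)))
          = Nq A d r (fun i => (k i : ℤ)) + Nq A d r (fun i => (g i : ℤ))
            + d * Bq A (fun i => (k i : ℤ)) (fun i => (g i : ℤ)) :=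
        addN A hA hdiag d r _ _
      apply chi_eq_of_dvd q hq
      have : Nq A d r (fun i => (h i : ℤ)) - Nq A d r (fun i => (k i : ℤ))
          - (Nq A d r (fun i => (g i : ℤ))
            + d * Bq A (fun i => (k i : ℤ)) (fun i => (g i : ℤ)))
          = Nq A d r (fun i => (h i : ℤ))
          - Nq A d r ((fun i => (k i : ℤ)) + (fun i => (g i : ℤ))) := by
        rw [hd2]; ring
      rw [this]
      exact hd1
  -- Step 5 : inner sum over k factorizes
  have inner : ∀ g ∈ P,
      (∑ k ∈ P, chi q (Nq A d r (fun i => (g i : ℤ))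
          + d * Bq A (fun i => (k i : ℤ)) (fun i => (g i : ℤ))))
      = chi q (Nq A d r (fun i => (g i : ℤ))) * (if cond g then ((q:ℂ))^s else 0) := by
    intro g hgm
    have hsplit : ∀ k : Fin s → ℕ,
        chi q (Nq A d r (fun i => (g i : ℤ))
            + d * Bq A (fun i => (k i : ℤ)) (fun i => (g i : ℤ)))
        = chi q (Nq A d r (fun i => (g i : ℤ)))
            * chi q (d * Bq A (fun i => (k i : ℤ)) (fun i => (g i : ℤ))) :=
      fun k => chi_add q _ _
    rw [Finset.sum_congr rfl (fun k _ => hsplit k), ← Finset.mul_sum]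
    congr 1
    have hBk : ∀ k : Fin s → ℕ,
        d * Bq A (fun i => (k i : ℤ)) (fun i => (g i : ℤ))
        = ∑ i, (d * (∑ j, A i j * (g j : ℤ))) * ((k i : ℕ) : ℤ) := by
      intro k
      rw [Bq, Finset.mul_sum]
      apply Finset.sum_congr rfl; intro i _
      rw [Finset.mul_sum, Finset.mul_sum, Finset.sum_mul]
      apply Finset.sum_congr rfl; intro j _
      ring
    have hfact : ∀ k : Fin s → ℕ,
        chi q (d * Bq A (fun i => (k i : ℤ)) (fun i => (g i : ℤ)))
        = ∏ i, chi q ((d * (∑ j, A i j * (g j : ℤ))) * ((k i : ℕ) : ℤ)) := by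
      intro k
      rw [hBk k, chi_sum]
    have hpus := Finset.prod_univ_sum (fun _ : Fin s => Finset.range q)
      (fun (i : Fin s) (x : ℕ) => chi q ((d * (∑ j, A i j * (g j : ℤ))) * (x : ℤ)))
    rw [Finset.sum_congr rfl (fun k _ => hfact k), hP, ← hpus]
    have hgeom : ∀ i : Fin s,
        (∑ t ∈ Finset.range q, chi q ((d * (∑ j, A i j * (g j : ℤ))) * (t : ℤ)))
        = if (q:ℤ) ∣ d * (∑ j, A i j * (g j : ℤ)) then (q:ℂ) else 0 :=
      fun i => chi_geom q hq _
    rw [Finset.prod_congr rfl (fun i _ => hgeom i)]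
    have hco : IsCoprime (q:ℤ) d := by
      rw [Int.isCoprime_iff_gcd_eq_one, Int.gcd_comm]
      exact hdq
    have hiff : ∀ i : Fin s, ((q:ℤ) ∣ d * (∑ j, A i j * (g j : ℤ))
        ↔ (q:ℤ) ∣ (∑ j, A i j * (g j : ℤ))) := by
      intro i
      exact ⟨fun hdc => hco.dvd_of_dvd_mul_left hdc, fun hc => hc.mul_left d⟩
    by_cases hall : cond g
    · have : ∀ i : Fin s, (if (q:ℤ) ∣ d * (∑ j, A i j * (g j : ℤ)) then (q:ℂ) else 0) = (q:ℂ) := by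
        intro i
        rw [if_pos ((hiff i).mpr (hall i))]
      rw [Finset.prod_congr rfl (fun i _ => this i), if_pos hall, Finset.prod_const,
        Finset.card_univ, Fintype.card_fin]
    · rw [if_neg hall]
      simp only [hcond] at hall
      push_neg at hall
      obtain ⟨i0, hi0⟩ := hall
      apply Finset.prod_eq_zero (Finset.mem_univ i0)
      rw [if_neg (fun hdc => hi0 ((hiff i0).mp hdc))]
  -- Step 6 : the squared bound
  have habs2 : ‖G‖^2 ≤ ((P.filter cond).card : ℝ) * (q:ℝ)^s := by
    have h1 : ‖G‖^2 = ‖G * (starRingEnd ℂ) G‖ := by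
      rw [norm_mul, Complex.norm_conj, sq]
    rw [h1, expand, Finset.sum_congr rfl reindex, Finset.sum_comm,
      Finset.sum_congr rfl inner]
    calc ‖(∑ g ∈ P, chi q (Nq A d r (fun i => (g i : ℤ)))
            * (if cond g then ((q:ℂ))^s else 0))‖
        ≤ ∑ g ∈ P, ‖(chi q (Nq A d r (fun i => (g i : ℤ)))
            * (if cond g then ((q:ℂ))^s else 0))‖ := norm_sum_le _ _
      _ = ∑ g ∈ P, (if cond g then ((q:ℝ))^s else 0) := by
          apply Finset.sum_congr rfl; intro g _
          rw [norm_mul, chi_abs, one_mul]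
          by_cases hc : cond g
          · rw [if_pos hc, if_pos hc, norm_pow, Complex.norm_natCast]
          · rw [if_neg hc, if_neg hc, norm_zero]
      _ = ((P.filter cond).card : ℝ) * (q:ℝ)^s := by
          rw [← Finset.sum_filter, Finset.sum_const, nsmul_eq_mul]
  -- Step 7 : cardinality bound
  have hsub : P.filter cond ⊆ Fintype.piFinset
      (fun _ : Fin s => (Finset.range q).filter (fun t => q ∣ L * t)) := by
    intro g hgm
    rw [Finset.mem_filter] at hgm
    rw [Fintype.mem_piFinset]
    intro i
    rw [Finset.mem_filter]
    refine ⟨Fintype.mem_piFinset.mp hgm.1 i, ?_⟩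
    have hc2 : ∀ j, (q:ℤ) ∣ ∑ l, A j l * ((g l : ℕ) : ℤ) := hgm.2
    have hdvd : (q:ℤ) ∣ (L:ℤ) * (g i : ℤ) :=
      L_dvd A hdet L hL.1.2 q (fun l => (g l : ℤ)) hc2 i
    have hcast : (q:ℤ) ∣ ((L * g i : ℕ) : ℤ) := by push_cast; exact hdvd
    exact_mod_cast hcast
  have hcardn : (P.filter cond).card ≤ Nat.gcd L q ^ s := by
    calc (P.filter cond).card
        ≤ (Fintype.piFinset (fun _ : Fin s =>
            (Finset.range q).filter (fun t => q ∣ L * t))).card := Finset.card_le_card hsub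
      _ = ∏ _i : Fin s, ((Finset.range q).filter (fun t => q ∣ L * t)).card :=
          Fintype.card_piFinset _
      _ = Nat.gcd L q ^ s := by
          rw [count_multiples q L hq hL.1.1, Finset.prod_const, Finset.card_univ,
            Fintype.card_fin]
  -- Step 8 : conclude
  have habs3 : ‖G‖^2 ≤ (Nat.gcd L q : ℝ)^s * (q:ℝ)^s := by
    refine le_trans habs2 (mul_le_mul_of_nonneg_right ?_ (by positivity))
    exact_mod_cast Nat.cast_le.mpr hcardn
  have hnn : 0 ≤ ‖G‖ := norm_nonneg _
  have hfin : ‖G‖ ≤ Real.sqrt ((Nat.gcd L q : ℝ)^s * (q:ℝ)^s) := by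
    rw [← Real.sqrt_sq hnn]
    exact Real.sqrt_le_sqrt habs3
  refine le_trans hfin ?_
  rw [Real.sqrt_mul (by positivity), Real.sqrt_eq_rpow, Real.sqrt_eq_rpow,
    ← Real.rpow_natCast ((Nat.gcd L q : ℝ)) s, ← Real.rpow_natCast ((q:ℝ)) s,
    ← Real.rpow_mul (by positivity), ← Real.rpow_mul (by positivity)]
  apply le_of_eq
  rw [show (s:ℝ) * (1/2) = (s:ℝ)/2 by ring]
end

section
/- Let A be the integral Hessian matrix of an integral quadratic form F in s variables (A symmetric with even diagonal entries), let q be a positive odd integer. Then there exist integer matrices D, P of size s×s such that D is diagonal, gcd(det(P), q) = 1, and D ≡ Pᵀ A P (mod q). -/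
open Matrix

namespace DiagAux

variable {R : Type*} [CommRing R] {m : Type*} [Fintype m] [DecidableEq m]

def rowMat (a : m) (w : m → R) : Matrix m m R :=
  Matrix.of fun x y => if x = a then w y else 0

lemma mul_rowMat (M : Matrix m m R) (a : m) (w : m → R) (x y : m) :
    (M * rowMat a w) x y = M x a * w y := by
  rw [Matrix.mul_apply, Finset.sum_eq_single a]
  · simp [rowMat]
  · intro b _ hb; simp [rowMat, hb]
  · simp

lemma rowMatT_mul (M : Matrix m m R) (a : m) (w : m → R) (x y : m) :
    ((rowMat a w)ᵀ * M) x y = w x * M a y := by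
  rw [Matrix.mul_apply, Finset.sum_eq_single a]
  · simp [rowMat]
  · intro b _ hb; simp [rowMat, hb]
  · simp

lemma conj_rowMat_apply (M : Matrix m m R) (a : m) (w : m → R) (x y : m) :
    (((1 + rowMat a w)ᵀ * M * (1 + rowMat a w) : Matrix m m R)) x y
      = M x y + M x a * w y + w x * M a y + w x * M a a * w y := by
  have h1 : (1 + rowMat a w)ᵀ * M = M + (rowMat a w)ᵀ * M := by
    rw [transpose_add, transpose_one, add_mul, one_mul]
  rw [h1, mul_add, mul_one, Matrix.add_mul]
  simp only [Matrix.add_apply, mul_rowMat, rowMatT_mul]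
  ring

lemma rowMat_add (a : m) (w w' : m → R) : rowMat a w + rowMat a w' = rowMat a (w + w') := by
  ext x y; by_cases h : x = a <;> simp [rowMat, h]

lemma isUnit_det_one_add_rowMat (a : m) (w : m → R) (hw : w a = 0) :
    IsUnit (1 + rowMat a w).det := by
  apply Matrix.isUnit_det_of_right_inverse (B := 1 + rowMat a (-w))
  have hmul : rowMat a w * rowMat a (-w) = 0 := by
    ext x y
    rw [mul_rowMat]
    by_cases h : x = a <;> simp [rowMat, h, hw]
  rw [mul_add, add_mul, add_mul, mul_one, one_mul, mul_one, hmul, add_zero, add_assoc,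
    rowMat_add]
  have : rowMat a (w + -w) = (0 : Matrix m m R) := by ext x y; simp [rowMat]
  rw [this, add_zero]

lemma dvd_mul_entries {d : R} {A : Matrix m m R} (hA : ∀ i j, d ∣ A i j)
    (U V : Matrix m m R) (i j : m) : d ∣ (U * A * V) i j := by
  rw [Matrix.mul_apply]
  refine Finset.dvd_sum fun z _ => ?_
  refine Dvd.dvd.mul_right ?_ _
  rw [Matrix.mul_apply]
  exact Finset.dvd_sum fun t _ => (hA t z).mul_left _

lemma key_div {p : ℕ} (hp : p.Prime) {u : ℤ} (hu : ¬ (p : ℤ) ∣ u) {v k : ℕ} (hvk : v ≤ k)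
    {b : ℤ} (hb : (p : ℤ) ^ v ∣ b) : ∃ t : ℤ, (p : ℤ) ^ k ∣ b - (p : ℤ) ^ v * u * t := by
  obtain ⟨c, rfl⟩ := hb
  have hpp : Prime (p : ℤ) := Nat.prime_iff_prime_int.mp hp
  have hcop : IsCoprime u ((p : ℤ) ^ (k - v)) :=
    ((hpp.coprime_iff_not_dvd.mpr hu).symm).pow_right
  obtain ⟨x, y, hxy⟩ := hcop
  refine ⟨x * c, ⟨y * c, ?_⟩⟩
  have hpk : (p : ℤ) ^ k = (p : ℤ) ^ v * (p : ℤ) ^ (k - v) := by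
    rw [← pow_add, Nat.add_sub_cancel' hvk]
  rw [hpk]
  linear_combination (-((p : ℤ) ^ v * c)) * hxy

lemma isCoprime_of_isUnit {a b : R} (h : IsUnit a) : IsCoprime a b := by
  obtain ⟨u, rfl⟩ := h
  exact ⟨(u⁻¹ : Rˣ), 0, by simp⟩

lemma core (p : ℕ) (hp : p.Prime) (hp2 : p ≠ 2) (k : ℕ) :
    ∀ n (A : Matrix (Fin n) (Fin n) ℤ), Aᵀ = A →
    ∃ D P : Matrix (Fin n) (Fin n) ℤ,
      (∀ i j, i ≠ j → D i j = 0) ∧ IsCoprime P.det ((p : ℤ) ^ k) ∧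
      ∀ i j, (p : ℤ) ^ k ∣ ((Pᵀ * A * P) i j - D i j) := by
  intro n
  induction n with
  | zero =>
    intro A _
    exact ⟨0, 1, fun i => i.elim0, by simp [isCoprime_one_left], fun i => i.elim0⟩
  | succ n IH =>
    intro A hA
    classical
    by_cases h0 : ∀ i j, (p : ℤ) ^ k ∣ A i j
    · refine ⟨0, 1, fun i j _ => rfl, by simp [isCoprime_one_left], fun i j => ?_⟩
      simpa using h0 i j
    push_neg at h0
    obtain ⟨iw, jw, hw0⟩ := h0
    have hk0 : k ≠ 0 := by rintro rfl; exact hw0 (by simp)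
    have hkpos : 0 < k := Nat.pos_of_ne_zero hk0
    have hQex : ∃ j : ℕ, ∃ i l : Fin (n+1), ¬ ((p : ℤ) ^ (j+1) ∣ A i l) :=
      ⟨k - 1, iw, jw, by rwa [Nat.sub_add_cancel hkpos]⟩
    set v : ℕ := Nat.find hQex with hvdef
    have hvspec : ∃ i l : Fin (n+1), ¬ ((p : ℤ) ^ (v+1) ∣ A i l) := Nat.find_spec hQex
    have hvle : v ≤ k - 1 := Nat.find_le ⟨iw, jw, by rwa [Nat.sub_add_cancel hkpos]⟩
    have hvlt : v < k := lt_of_le_of_lt hvle (Nat.sub_lt hkpos one_pos)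
    have hvk : v ≤ k := hvlt.le
    have hmin : ∀ i l : Fin (n+1), (p : ℤ) ^ v ∣ A i l := by
      intro i l
      rcases Nat.eq_zero_or_pos v with hv0 | hv0
      · rw [hv0]; simp
      · have hlt : v - 1 < v := Nat.sub_lt hv0 one_pos
        have hnm := Nat.find_min hQex hlt
        push_neg at hnm
        have h := hnm i l
        rwa [Nat.sub_add_cancel hv0] at h
    obtain ⟨i₀, l₀, hnd⟩ := hvspec
    -- Step 1: get a unit-determinant Q₁ so that Q₁ᵀ A Q₁ has a diagonal entry of
    -- minimal valuation
    have hstep1 : ∃ Q₁ : Matrix (Fin (n+1)) (Fin (n+1)) ℤ, IsUnit Q₁.det ∧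
        ∃ i₁, ¬ ((p : ℤ) ^ (v+1) ∣ (Q₁ᵀ * A * Q₁) i₁ i₁) := by
      by_cases hd : ∃ i, ¬ ((p : ℤ) ^ (v+1) ∣ A i i)
      · obtain ⟨i, hi⟩ := hd
        exact ⟨1, by simp, i, by simpa using hi⟩
      · push_neg at hd
        have hne : i₀ ≠ l₀ := by rintro rfl; exact hnd (hd i₀)
        set w : Fin (n+1) → ℤ := fun y => if y = i₀ then 1 else 0 with hwdef
        have hwl : w l₀ = 0 := if_neg hne.symm
        refine ⟨1 + rowMat l₀ w, isUnit_det_one_add_rowMat _ _ hwl, i₀, ?_⟩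
        rw [conj_rowMat_apply]
        have hwi : w i₀ = 1 := if_pos rfl
        rw [hwi]
        intro hdvd
        have hsym : A l₀ i₀ = A i₀ l₀ := by
          have h := congrFun (congrFun hA l₀) i₀
          simpa using h.symm
        have h2 : ((p : ℤ) ^ (v+1)) ∣ 2 * A i₀ l₀ := by
          have hii := hd i₀
          have hll := hd l₀
          have := (hdvd.sub hii).sub hll
          have heq : A i₀ i₀ + A i₀ l₀ * 1 + 1 * A l₀ i₀ + 1 * A l₀ l₀ * 1 - A i₀ i₀
              - A l₀ l₀ = 2 * A i₀ l₀ := by rw [hsym]; ring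
          rwa [heq] at this
        have hcop2 : IsCoprime ((p : ℤ) ^ (v+1)) 2 := by
          have hpp : Prime (p : ℤ) := Nat.prime_iff_prime_int.mp hp
          have hnd2 : ¬ (p : ℤ) ∣ 2 := by
            intro hdp
            have : p ∣ 2 := by exact_mod_cast hdp
            exact hp2 ((Nat.prime_dvd_prime_iff_eq hp Nat.prime_two).mp this)
          exact (hpp.coprime_iff_not_dvd.mpr hnd2).pow_left
        exact hnd (hcop2.dvd_of_dvd_mul_left h2)
    obtain ⟨Q₁, hQ₁u, i₁, hpiv1⟩ := hstep1
    set A₁ : Matrix (Fin (n+1)) (Fin (n+1)) ℤ := Q₁ᵀ * A * Q₁ with hA₁def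
    have hA₁s : A₁ᵀ = A₁ := by
      rw [hA₁def]
      simp [Matrix.transpose_mul, Matrix.mul_assoc, hA]
    have hA₁div : ∀ i j, (p : ℤ) ^ v ∣ A₁ i j := fun i j => dvd_mul_entries hmin _ _ i j
    -- Step 2: permute the pivot to the last position
    set σ : Equiv.Perm (Fin (n+1)) := Equiv.swap i₁ (Fin.last n) with hσdef
    set Q₂ : Matrix (Fin (n+1)) (Fin (n+1)) ℤ :=
      (1 : Matrix (Fin (n+1)) (Fin (n+1)) ℤ).submatrix ⇑(Equiv.refl (Fin (n+1))) ⇑σ with hQ₂def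
    have hQ₂T : Q₂ᵀ = (1 : Matrix (Fin (n+1)) (Fin (n+1)) ℤ).submatrix ⇑σ
        ⇑(Equiv.refl (Fin (n+1))) := by
      rw [hQ₂def, transpose_submatrix, transpose_one]
    have hconj2 : ∀ M : Matrix (Fin (n+1)) (Fin (n+1)) ℤ,
        Q₂ᵀ * M * Q₂ = M.submatrix ⇑σ ⇑σ := by
      intro M
      rw [hQ₂T, Matrix.one_submatrix_mul, hQ₂def, Matrix.mul_submatrix_one]
      simp [Matrix.submatrix_submatrix, Function.comp_def]
    have hQ₂u : IsUnit Q₂.det := by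
      apply Matrix.isUnit_det_of_left_inverse (B := Q₂ᵀ)
      have h := hconj2 1
      rw [Matrix.mul_one] at h
      rw [h, Matrix.submatrix_one_equiv]
    set A₂ : Matrix (Fin (n+1)) (Fin (n+1)) ℤ := Q₂ᵀ * A₁ * Q₂ with hA₂def
    have hA₂sub : A₂ = A₁.submatrix ⇑σ ⇑σ := hconj2 A₁
    have hA₂s : A₂ᵀ = A₂ := by
      rw [hA₂def]
      simp [Matrix.transpose_mul, Matrix.mul_assoc, hA₁s]
    have hA₂div : ∀ i j, (p : ℤ) ^ v ∣ A₂ i j := fun i j => dvd_mul_entries hA₁div _ _ i j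
    have hpiv : ¬ ((p : ℤ) ^ (v+1) ∣ A₂ (Fin.last n) (Fin.last n)) := by
      rw [hA₂sub]
      simpa [hσdef, Equiv.swap_apply_right] using hpiv1
    -- Step 3: clear the last row and column modulo p^k
    obtain ⟨u, hu⟩ := hA₂div (Fin.last n) (Fin.last n)
    have hpu : ¬ (p : ℤ) ∣ u := by
      rintro ⟨u', rfl⟩
      exact hpiv ⟨u', by rw [hu, pow_succ]; ring⟩
    have hkey : ∀ y : Fin (n+1), ∃ t : ℤ,
        (p : ℤ) ^ k ∣ A₂ (Fin.last n) y - (p : ℤ) ^ v * u * t :=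
      fun y => key_div hp hpu hvk (hA₂div (Fin.last n) y)
    choose t ht using hkey
    set w2 : Fin (n+1) → ℤ := fun y => if y = Fin.last n then 0 else -(t y) with hw2def
    have hw2last : w2 (Fin.last n) = 0 := if_pos rfl
    set Q₃ : Matrix (Fin (n+1)) (Fin (n+1)) ℤ := 1 + rowMat (Fin.last n) w2 with hQ₃def
    have hQ₃u : IsUnit Q₃.det := isUnit_det_one_add_rowMat _ _ hw2last
    set N : Matrix (Fin (n+1)) (Fin (n+1)) ℤ := Q₃ᵀ * A₂ * Q₃ with hNdef
    have hNapp : ∀ x y, N x y = A₂ x y + A₂ x (Fin.last n) * w2 y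
        + w2 x * A₂ (Fin.last n) y + w2 x * A₂ (Fin.last n) (Fin.last n) * w2 y := by
      intro x y; rw [hNdef, hQ₃def, conj_rowMat_apply]
    have hNs : Nᵀ = N := by
      rw [hNdef]
      simp [Matrix.transpose_mul, Matrix.mul_assoc, hA₂s]
    have hNlast : ∀ y, y ≠ Fin.last n → (p : ℤ) ^ k ∣ N (Fin.last n) y := by
      intro y hy
      have e1 : w2 y = -(t y) := if_neg hy
      have e2 : N (Fin.last n) y = A₂ (Fin.last n) y - (p : ℤ) ^ v * u * t y := by
        rw [hNapp, e1, hw2last, hu]; ring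
      rw [e2]; exact ht y
    have hNcol : ∀ x, x ≠ Fin.last n → (p : ℤ) ^ k ∣ N x (Fin.last n) := by
      intro x hx
      have h := congrFun (congrFun hNs x) (Fin.last n)
      have h2 : N x (Fin.last n) = N (Fin.last n) x := by
        rw [← h]; simp
      rw [h2]; exact hNlast x hx
    have hNll : N (Fin.last n) (Fin.last n) = A₂ (Fin.last n) (Fin.last n) := by
      rw [hNapp, hw2last]; ring
    -- Step 4: recurse on the upper-left block
    set B : Matrix (Fin n) (Fin n) ℤ := Matrix.of fun i j => N i.castSucc j.castSucc with hBdef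
    have hBs : Bᵀ = B := by
      ext i j
      show N j.castSucc i.castSucc = N i.castSucc j.castSucc
      have h := congrFun (congrFun hNs i.castSucc) j.castSucc
      rw [← h]; simp
    obtain ⟨DB, PB, hDB, hPBdet, hCB⟩ := IH B hBs
    set eS : Fin n ⊕ Fin 1 ≃ Fin (n+1) := finSumFinEquiv with heSdef
    have hinl : ∀ i : Fin n, eS (Sum.inl i) = i.castSucc := by
      intro i; simp [heSdef]
      rfl
    have hinr : ∀ i : Fin 1, eS (Sum.inr i) = Fin.last n := by
      intro i
      rw [Subsingleton.elim i 0]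
      simp [heSdef]
      rfl
    set cB : Matrix (Fin n) (Fin 1) ℤ := Matrix.of fun i _ => N i.castSucc (Fin.last n) with hcBdef
    set rB : Matrix (Fin 1) (Fin n) ℤ := Matrix.of fun _ j => N (Fin.last n) j.castSucc with hrBdef
    set gB : Matrix (Fin 1) (Fin 1) ℤ :=
      Matrix.of fun _ _ => N (Fin.last n) (Fin.last n) with hgBdef
    have hNe : N.submatrix ⇑eS ⇑eS = Matrix.fromBlocks B cB rB gB := by
      ext x y
      rcases x with i | i <;> rcases y with j | j <;>
        simp [Matrix.submatrix_apply, hinl, hinr, hBdef, hcBdef, hrBdef, hgBdef]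
    set F : Matrix (Fin n ⊕ Fin 1) (Fin n ⊕ Fin 1) ℤ :=
      Matrix.fromBlocks PB 0 0 (1 : Matrix (Fin 1) (Fin 1) ℤ) with hFdef
    set Q₄ : Matrix (Fin (n+1)) (Fin (n+1)) ℤ := F.submatrix ⇑eS.symm ⇑eS.symm with hQ₄def
    have hQ₄det : Q₄.det = PB.det := by
      rw [hQ₄def, Matrix.det_submatrix_equiv_self eS.symm, hFdef,
        Matrix.det_fromBlocks_zero₂₁, Matrix.det_one, mul_one]
    have hprod : Q₄ᵀ * N * Q₄ = (Matrix.fromBlocks (PBᵀ * B * PB) (PBᵀ * cB) (rB * PB)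
        gB).submatrix ⇑eS.symm ⇑eS.symm := by
      have hNsub : N = (N.submatrix ⇑eS ⇑eS).submatrix ⇑eS.symm ⇑eS.symm := by
        ext a b
        simp
      have hQ₄T : Q₄ᵀ = (Matrix.fromBlocks PBᵀ 0 0
          (1 : Matrix (Fin 1) (Fin 1) ℤ)).submatrix ⇑eS.symm ⇑eS.symm := by
        rw [hQ₄def, transpose_submatrix, hFdef, Matrix.fromBlocks_transpose]
        simp
      rw [hQ₄T]
      conv_lhs => rw [hNsub, hNe]
      rw [hQ₄def, Matrix.submatrix_mul_equiv, Matrix.submatrix_mul_equiv]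
      congr 1
      rw [hFdef, Matrix.fromBlocks_multiply, Matrix.fromBlocks_multiply]
      simp [Matrix.mul_assoc]
    -- Assemble the final matrices
    refine ⟨(Matrix.fromBlocks DB 0 0 gB).submatrix ⇑eS.symm ⇑eS.symm,
      Q₁ * (Q₂ * (Q₃ * Q₄)), ?_, ?_, ?_⟩
    · intro x y hxy
      rw [Matrix.submatrix_apply]
      rcases hx : eS.symm x with i | i <;> rcases hy : eS.symm y with j | j
      · have hij : i ≠ j := by
          rintro rfl
          exact hxy (eS.symm.injective (hx.trans hy.symm))
        simpa using hDB i j hij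
      · simp
      · simp
      · exfalso
        apply hxy
        apply eS.symm.injective
        rw [hx, hy, Subsingleton.elim i j]
    · rw [Matrix.det_mul, Matrix.det_mul, Matrix.det_mul]
      refine (isCoprime_of_isUnit hQ₁u).mul_left ?_
      refine (isCoprime_of_isUnit hQ₂u).mul_left ?_
      refine (isCoprime_of_isUnit hQ₃u).mul_left ?_
      rw [hQ₄det]; exact hPBdet
    · intro x y
      have hPAP : (Q₁ * (Q₂ * (Q₃ * Q₄)))ᵀ * A * (Q₁ * (Q₂ * (Q₃ * Q₄)))
          = Q₄ᵀ * N * Q₄ := by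
        rw [hNdef, hA₂def, hA₁def]
        simp only [Matrix.transpose_mul, Matrix.mul_assoc]
      rw [hPAP, hprod, Matrix.submatrix_apply, Matrix.submatrix_apply]
      rcases hx : eS.symm x with i | i <;> rcases hy : eS.symm y with j | j
      · simpa using hCB i j
      · simp only [Matrix.fromBlocks_apply₁₂, Matrix.zero_apply, sub_zero]
        rw [Matrix.mul_apply]
        refine Finset.dvd_sum fun z _ => ?_
        have hz : z.castSucc ≠ Fin.last n := (Fin.castSucc_lt_last z).ne
        exact ((hNcol z.castSucc hz).mul_left _)
      · simp only [Matrix.fromBlocks_apply₂₁, Matrix.zero_apply, sub_zero]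
        rw [Matrix.mul_apply]
        refine Finset.dvd_sum fun z _ => ?_
        have hz : z.castSucc ≠ Fin.last n := (Fin.castSucc_lt_last z).ne
        exact ((hNlast z.castSucc hz).mul_right _)
      · simp

lemma dvd_sub_iff_cast_eq (q : ℕ) (x y : ℤ) :
    (q : ℤ) ∣ x - y ↔ ((x : ZMod q)) = (y : ZMod q) := by
  rw [ZMod.intCast_eq_intCast_iff, Int.modEq_iff_dvd, ← neg_sub x y, dvd_neg]

def GoodMod (q : ℕ) : Prop :=
  ∀ n (A : Matrix (Fin n) (Fin n) ℤ), Aᵀ = A →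
    ∃ D P : Matrix (Fin n) (Fin n) ℤ,
      (∀ i j, i ≠ j → D i j = 0) ∧ IsCoprime P.det (q : ℤ) ∧
      ∀ i j, (q : ℤ) ∣ ((Pᵀ * A * P) i j - D i j)

lemma good_one : GoodMod 1 := by
  intro n A _
  exact ⟨0, 1, fun i j _ => rfl, by simp [isCoprime_one_left], fun i j => by simp⟩

lemma good_prime_pow (p k : ℕ) (hp : p.Prime) (hp2 : p ≠ 2) : GoodMod (p ^ k) := by
  intro n A hA
  obtain ⟨D, P, h1, h2, h3⟩ := core p hp hp2 k n A hA
  exact ⟨D, P, h1, by push_cast; exact h2, fun i j => by push_cast; exact h3 i j⟩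

lemma good_mul (a b : ℕ) (hab : Nat.Coprime a b) (ha : GoodMod a) (hb : GoodMod b) :
    GoodMod (a * b) := by
  intro n A hA
  obtain ⟨Da, Pa, hDa, hPa, hca⟩ := ha n A hA
  obtain ⟨Db, Pb, hDb, hPb, hcb⟩ := hb n A hA
  have hcop : IsCoprime (a : ℤ) (b : ℤ) := Nat.isCoprime_iff_coprime.mpr hab
  obtain ⟨x, y, hxy⟩ := hcop
  set mix : ℤ → ℤ → ℤ := fun s u => s * (y * b) + u * (x * a) with hmixdef
  have hmixa : ∀ s u : ℤ, (a : ℤ) ∣ mix s u - s := by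
    intro s u
    refine ⟨x * (u - s), ?_⟩
    rw [hmixdef]
    linear_combination s * hxy
  have hmixb : ∀ s u : ℤ, (b : ℤ) ∣ mix s u - u := by
    intro s u
    refine ⟨y * (s - u), ?_⟩
    rw [hmixdef]
    linear_combination u * hxy
  set P : Matrix (Fin n) (Fin n) ℤ := Matrix.of fun i j => mix (Pa i j) (Pb i j) with hPdef
  set D : Matrix (Fin n) (Fin n) ℤ := Matrix.of fun i j => mix (Da i j) (Db i j) with hDdef
  have hPa' : ∀ i j, (a : ℤ) ∣ P i j - Pa i j := fun i j => hmixa _ _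
  have hPb' : ∀ i j, (b : ℤ) ∣ P i j - Pb i j := fun i j => hmixb _ _
  have hDa' : ∀ i j, (a : ℤ) ∣ D i j - Da i j := fun i j => hmixa _ _
  have hDb' : ∀ i j, (b : ℤ) ∣ D i j - Db i j := fun i j => hmixb _ _
  -- a generic congruence transfer
  have main : ∀ (q : ℕ) (Pq Dq : Matrix (Fin n) (Fin n) ℤ),
      (∀ i j, (q : ℤ) ∣ P i j - Pq i j) → (∀ i j, (q : ℤ) ∣ D i j - Dq i j) →
      IsCoprime Pq.det (q : ℤ) → (∀ i j, (q : ℤ) ∣ ((Pqᵀ * A * Pq) i j - Dq i j)) →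
      IsCoprime P.det (q : ℤ) ∧ ∀ i j, (q : ℤ) ∣ ((Pᵀ * A * P) i j - D i j) := by
    intro q Pq Dq hPq hDq hdet hcong
    have hmap : P.map (Int.cast : ℤ → ZMod q) = Pq.map (Int.cast : ℤ → ZMod q) := by
      ext i j
      simp only [Matrix.map_apply]
      rw [← dvd_sub_iff_cast_eq]
      exact hPq i j
    have hmapT : Pᵀ.map (Int.cast : ℤ → ZMod q) = Pqᵀ.map (Int.cast : ℤ → ZMod q) := by
      rw [Matrix.transpose_map, Matrix.transpose_map, hmap]
    have hkey : ∀ i j, (q : ℤ) ∣ ((Pᵀ * A * P) i j - (Pqᵀ * A * Pq) i j) := by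
      intro i j
      rw [dvd_sub_iff_cast_eq]
      have hm : (Pᵀ * A * P).map (Int.cast : ℤ → ZMod q)
          = (Pqᵀ * A * Pq).map (Int.cast : ℤ → ZMod q) := by
        have e : (Int.cast : ℤ → ZMod q) = ⇑(Int.castRingHom (ZMod q)) := rfl
        rw [e] at hmap hmapT ⊢
        rw [Matrix.map_mul (f := Int.castRingHom (ZMod q)),
          Matrix.map_mul (f := Int.castRingHom (ZMod q)),
          Matrix.map_mul (f := Int.castRingHom (ZMod q)),
          Matrix.map_mul (f := Int.castRingHom (ZMod q)), hmapT, hmap]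
      have h := congrFun (congrFun hm i) j
      simpa [Matrix.map_apply] using h
    constructor
    · have hdvd : (q : ℤ) ∣ P.det - Pq.det := by
        rw [dvd_sub_iff_cast_eq]
        show (Int.castRingHom (ZMod q)) P.det = (Int.castRingHom (ZMod q)) Pq.det
        rw [RingHom.map_det, RingHom.map_det]
        show (P.map (Int.cast : ℤ → ZMod q)).det = (Pq.map (Int.cast : ℤ → ZMod q)).det
        rw [hmap]
      obtain ⟨s, hs⟩ := hdvd
      have : P.det = Pq.det + s * (q : ℤ) := by linear_combination hs
      rw [this]
      exact hdet.add_mul_right_left s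
    · intro i j
      have heq : (Pᵀ * A * P) i j - D i j
          = ((Pᵀ * A * P) i j - (Pqᵀ * A * Pq) i j)
            + ((Pqᵀ * A * Pq) i j - Dq i j) - (D i j - Dq i j) := by ring
      rw [heq]
      exact dvd_sub (dvd_add (hkey i j) (hcong i j)) (hDq i j)
  obtain ⟨hdeta, hconga⟩ := main a Pa Da hPa' hDa' hPa hca
  obtain ⟨hdetb, hcongb⟩ := main b Pb Db hPb' hDb' hPb hcb
  refine ⟨D, P, ?_, ?_, ?_⟩
  · intro i j hij
    have h1 : Da i j = 0 := hDa i j hij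
    have h2 : Db i j = 0 := hDb i j hij
    simp [hDdef, hmixdef, h1, h2]
  · have := hdeta.mul_right hdetb
    rwa [show ((a : ℤ) * (b : ℤ)) = ((a * b : ℕ) : ℤ) by push_cast; ring] at this
  · intro i j
    have hcop' : IsCoprime (a : ℤ) (b : ℤ) := ⟨x, y, hxy⟩
    have := hcop'.mul_dvd (hconga i j) (hcongb i j)
    rwa [show ((a : ℤ) * (b : ℤ)) = ((a * b : ℕ) : ℤ) by push_cast; ring] at this

lemma good_all : ∀ q : ℕ, Odd q → GoodMod q := by
  intro q
  induction q using Nat.recOnPosPrimePosCoprime with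
  | prime_pow p n hpp hn =>
    intro hodd
    have hp' : p.Prime := hpp
    have hp2 : p ≠ 2 := by
      rintro rfl
      have : (2 : ℕ) ∣ 2 ^ n := dvd_pow_self 2 hn.ne'
      rw [Nat.odd_iff] at hodd
      omega
    exact good_prime_pow p n hp' hp2
  | zero => intro h; exact absurd h (by simp)
  | one => intro _; exact good_one
  | coprime a b ha hb hab iha ihb =>
    intro hodd
    obtain ⟨hoa, hob⟩ := Nat.odd_mul.mp hodd
    exact good_mul a b hab (iha hoa) (ihb hob)

end DiagAux

/-- Diagonalization of the Hessian of an integral quadratic form modulo an odd integer `q`: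
there are integer matrices `D` (diagonal) and `P` with `gcd(det P, q) = 1` and
`D ≡ Pᵀ A P (mod q)`. -/
theorem diagonalize_mod_odd (s : ℕ) (A : Matrix (Fin s) (Fin s) ℤ) (hA : A.IsSymm)
    (hdiag : ∀ i, 2 ∣ A i i) (q : ℕ) (hq : 0 < q) (hodd : Odd q) :
    ∃ D P : Matrix (Fin s) (Fin s) ℤ,
      (∀ i j, i ≠ j → D i j = 0) ∧
      Int.gcd P.det q = 1 ∧
      D.map (Int.cast : ℤ → ZMod q) = (P.transpose * A * P).map (Int.cast : ℤ → ZMod q) := by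
  obtain ⟨D, P, h1, h2, h3⟩ := DiagAux.good_all q hodd s A hA
  refine ⟨D, P, h1, ?_, ?_⟩
  · exact Int.isCoprime_iff_gcd_eq_one.mp h2
  · ext i j
    simp only [Matrix.map_apply]
    rw [← DiagAux.dvd_sub_iff_cast_eq]
    have := h3 i j
    have heq : D i j - (Pᵀ * A * P) i j = -((Pᵀ * A * P) i j - D i j) := by ring
    rw [heq]
    exact (h3 i j).neg_right
end

section
/- Let F(x) = (1/2)xᵀAx be a positive definite real quadratic form in s variables with Hessian A, let n > 0 and c ∈ R. Then lim_{ε→0⁺} (1/(2ε)) ∫_{|F(m)-n|<ε} c dm = c · (2π)^{s/2} / (Γ(s/2) √det(A)) · n^{s/2 - 1}. -/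
open scoped BigOperators
open Matrix MeasureTheory

lemma ann_volume (s : ℕ) (hs : s ≠ 0) {a b : ℝ} (ha : 0 ≤ a) (hab : a < b) :
    volume {x : Fin s → ℝ | a < x ⬝ᵥ x ∧ x ⬝ᵥ x < b}
      = ENNReal.ofReal ((Real.sqrt b ^ s - Real.sqrt a ^ s) *
          (Real.sqrt Real.pi ^ s / Real.Gamma (s / 2 + 1))) := by
  haveI : Nonempty (Fin s) := ⟨⟨0, Nat.pos_of_ne_zero hs⟩⟩
  have hQ : Continuous fun x : Fin s → ℝ => x ⬝ᵥ x := by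
    unfold dotProduct
    exact continuous_finset_sum _ fun i _ => (continuous_apply i).mul (continuous_apply i)
  have hmeas : MeasurableSet {x : Fin s → ℝ | a < x ⬝ᵥ x ∧ x ⬝ᵥ x < b} :=
    ((isOpen_lt continuous_const hQ).inter (isOpen_lt hQ continuous_const)).measurableSet
  rw [← (EuclideanSpace.volume_preserving_symm_measurableEquiv_toLp (Fin s)).measure_preimage
    hmeas.nullMeasurableSet]
  have hset : (MeasurableEquiv.toLp 2 (Fin s → ℝ)).symm ⁻¹' {x | a < x ⬝ᵥ x ∧ x ⬝ᵥ x < b}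
      = Metric.ball (0 : EuclideanSpace ℝ (Fin s)) (Real.sqrt b)
        \ Metric.closedBall 0 (Real.sqrt a) := by
    ext y
    have hyy : ((MeasurableEquiv.toLp 2 (Fin s → ℝ)).symm y)
        ⬝ᵥ ((MeasurableEquiv.toLp 2 (Fin s → ℝ)).symm y) = ‖y‖ ^ 2 := by
      rw [EuclideanSpace.norm_eq, Real.sq_sqrt (by positivity)]
      unfold dotProduct
      refine Finset.sum_congr rfl fun i _ => ?_
      simp [Real.norm_eq_abs,
        sq_abs, sq]
    simp only [Set.mem_preimage, Set.mem_setOf_eq, Set.mem_diff, Metric.mem_ball,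
      Metric.mem_closedBall, dist_zero_right, hyy]
    constructor
    · rintro ⟨h1, h2⟩
      refine ⟨?_, ?_⟩
      · exact (Real.lt_sqrt (norm_nonneg _)).2 h2
      · intro hle
        have h3 : ‖y‖ ^ 2 ≤ a := by
          have := Real.sq_sqrt ha
          nlinarith [Real.sqrt_nonneg a, norm_nonneg y]
        linarith
    · rintro ⟨h1, h2⟩
      rw [not_le] at h2
      refine ⟨?_, (Real.lt_sqrt (norm_nonneg _)).1 h1⟩
      have := Real.sq_sqrt ha
      nlinarith [Real.sqrt_nonneg a, norm_nonneg y]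
  rw [hset, measure_diff (Metric.closedBall_subset_ball (Real.sqrt_lt_sqrt ha hab))
      measurableSet_closedBall.nullMeasurableSet measure_closedBall_lt_top.ne,
    EuclideanSpace.volume_ball, EuclideanSpace.volume_closedBall]
  have hb : (0:ℝ) ≤ b := ha.trans hab.le
  have hω : (0:ℝ) ≤ Real.sqrt Real.pi ^ s / Real.Gamma (s / 2 + 1) := by
    have : (0:ℝ) < Real.Gamma (s / 2 + 1) := Real.Gamma_pos_of_pos (by positivity)
    positivity
  have hpow : Real.sqrt a ^ s ≤ Real.sqrt b ^ s :=
    pow_le_pow_left₀ (Real.sqrt_nonneg a) (Real.sqrt_le_sqrt hab.le) s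
  rw [Fintype.card_fin, ← ENNReal.ofReal_pow (Real.sqrt_nonneg b),
    ← ENNReal.ofReal_pow (Real.sqrt_nonneg a),
    ← ENNReal.ofReal_mul (by positivity), ← ENNReal.ofReal_mul (by positivity),
    ← ENNReal.ofReal_sub _ (by positivity), sub_mul]

open scoped MatrixOrder in
/-- Density of real solutions to `F(m) = n` for a positive definite quadratic form
`F(x) = (1/2)xᵀAx`:
`lim_{ε→0⁺} (1/(2ε)) ∫_{|F(m)-n|<ε} c dm = c (2π)^{s/2} n^{s/2-1} / (Γ(s/2) √det A)`. -/
theorem shell_volume_limit (s : ℕ) (A : Matrix (Fin s) (Fin s) ℝ) (hA : A.PosDef)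
    (n c : ℝ) (hn : 0 < n) :
    Filter.Tendsto
      (fun ε : ℝ => (1 / (2 * ε)) *
        ∫ _m in {m : Fin s → ℝ | |(1 / 2) * (m ⬝ᵥ A.mulVec m) - n| < ε}, c)
      (nhdsWithin 0 (Set.Ioi 0))
      (nhds (c * (2 * Real.pi) ^ ((s : ℝ) / 2) /
        (Real.Gamma ((s : ℝ) / 2) * Real.sqrt A.det) * n ^ ((s : ℝ) / 2 - 1))) := by
  have hmem : Set.Ioo (0:ℝ) n ∈ nhdsWithin (0:ℝ) (Set.Ioi 0) :=
    Ioo_mem_nhdsGT_of_mem ⟨le_refl 0, hn⟩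
  rcases Nat.eq_zero_or_pos s with hs | hs
  · subst hs
    have hlim : (nhds (c * (2 * Real.pi) ^ (((0:ℕ) : ℝ) / 2) /
        (Real.Gamma (((0:ℕ) : ℝ) / 2) * Real.sqrt A.det) * n ^ (((0:ℕ) : ℝ) / 2 - 1)))
        = nhds (0:ℝ) := by
      norm_num [Real.Gamma_zero]
    rw [hlim]
    apply Filter.Tendsto.congr' _ tendsto_const_nhds (f₁ := fun _ => (0:ℝ))
    filter_upwards [hmem] with ε hε
    have hempty : {m : Fin 0 → ℝ | |(1 / 2) * (m ⬝ᵥ A.mulVec m) - n| < ε} = ∅ := by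
      ext m
      simp only [Set.mem_setOf_eq, Set.mem_empty_iff_false, iff_false, not_lt]
      have : m ⬝ᵥ A.mulVec m = 0 := by simp [dotProduct]
      rw [this]
      rw [abs_of_nonpos (by linarith)]
      linarith [hε.2]
    rw [hempty]
    simp
  · -- main case s ≥ 1
    have hs' : s ≠ 0 := hs.ne'
    set PS : A.PosSemidef := hA.posSemidef with hPS
    set S := CFC.sqrt A with hSdef
    have PSS : S.PosSemidef := (CFC.sqrt_nonneg A).posSemidef
    have hT : Sᵀ = S := by
      have h := PSS.isHermitian
      simpa [Matrix.IsHermitian, Matrix.conjTranspose_eq_transpose_of_trivial] using h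
    have hdet0 : 0 ≤ S.det := by
      rw [PSS.isHermitian.det_eq_prod_eigenvalues]
      exact Finset.prod_nonneg fun i _ => by
        simpa using PSS.eigenvalues_nonneg i
    have hdA : 0 < A.det := hA.det_pos
    have hdd : S.det * S.det = A.det := by
      rw [← Matrix.det_mul, CFC.sqrt_mul_sqrt_self A PS.nonneg]
    have hdpos : 0 < S.det := by
      rcases hdet0.lt_or_eq with h | h
      · exact h
      · exfalso; rw [← h] at hdd; simp at hdd; rw [← hdd] at hdA; linarith
    have hsqrtdet : Real.sqrt A.det = S.det := by
      rw [← hdd, Real.sqrt_mul_self hdet0]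
    have key : ∀ m : Fin s → ℝ, m ⬝ᵥ A.mulVec m = (S.mulVec m) ⬝ᵥ (S.mulVec m) := by
      intro m
      conv_lhs => rw [← CFC.sqrt_mul_sqrt_self A PS.nonneg]
      rw [← Matrix.mulVec_mulVec, Matrix.dotProduct_mulVec, ← Matrix.mulVec_transpose, hT]
    set g : ℝ → ℝ := fun t => Real.sqrt (2 * t) ^ s with hg
    set ω : ℝ := Real.sqrt Real.pi ^ s / Real.Gamma ((s:ℝ) / 2 + 1) with hω
    have hωpos : 0 < ω := by
      have h1 : (0:ℝ) < Real.Gamma ((s:ℝ) / 2 + 1) := Real.Gamma_pos_of_pos (by positivity)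
      have h2 : (0:ℝ) < Real.sqrt Real.pi ^ s := by
        have := Real.pi_pos; positivity
      exact div_pos h2 h1
    -- volume of the shell for small ε
    have hvol : ∀ ε ∈ Set.Ioo (0:ℝ) n,
        volume {m : Fin s → ℝ | |(1 / 2) * (m ⬝ᵥ A.mulVec m) - n| < ε}
          = ENNReal.ofReal (S.det⁻¹ * ((g (n + ε) - g (n - ε)) * ω)) := by
      intro ε hε
      have hsetE : {m : Fin s → ℝ | |(1 / 2) * (m ⬝ᵥ A.mulVec m) - n| < ε}
          = ⇑(Matrix.toLin' S) ⁻¹'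
            {x : Fin s → ℝ | 2*(n-ε) < x ⬝ᵥ x ∧ x ⬝ᵥ x < 2*(n+ε)} := by
        ext m
        simp only [Set.mem_setOf_eq, Set.mem_preimage, Matrix.toLin'_apply, ← key m, abs_lt]
        constructor
        · rintro ⟨h1, h2⟩; constructor <;> linarith
        · rintro ⟨h1, h2⟩; constructor <;> linarith
      rw [hsetE, Measure.addHaar_preimage_linearMap volume
          (by rw [LinearMap.det_toLin']; exact hdpos.ne') _,
        ann_volume s hs' (by nlinarith [hε.2] : (0:ℝ) ≤ 2*(n-ε)) (by linarith [hε.1]),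
        LinearMap.det_toLin', abs_of_pos (inv_pos.2 hdpos), ← ENNReal.ofReal_mul
          (le_of_lt (inv_pos.2 hdpos))]
    -- the difference of powers is nonneg
    have hgmono : ∀ ε ∈ Set.Ioo (0:ℝ) n, 0 ≤ g (n + ε) - g (n - ε) := by
      intro ε hε
      have : Real.sqrt (2*(n-ε)) ≤ Real.sqrt (2*(n+ε)) := Real.sqrt_le_sqrt (by linarith [hε.1])
      exact sub_nonneg.2 (pow_le_pow_left₀ (Real.sqrt_nonneg _) this s)
    -- value of the function for small ε
    have hfun : ∀ ε ∈ Set.Ioo (0:ℝ) n,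
        (1 / (2 * ε)) * ∫ _m in {m : Fin s → ℝ | |(1 / 2) * (m ⬝ᵥ A.mulVec m) - n| < ε}, c
          = (S.det⁻¹ * ω * c) * ((g (n + ε) - g (n - ε)) / (2 * ε)) := by
      intro ε hε
      rw [MeasureTheory.setIntegral_const, measureReal_def, hvol ε hε, ENNReal.toReal_ofReal
        (by have := hgmono ε hε; positivity), smul_eq_mul]
      ring
    -- derivative of g at n
    set r : ℝ := Real.sqrt (2 * n) with hr
    have hrpos : 0 < r := Real.sqrt_pos.2 (by linarith)
    set D : ℝ := (s:ℝ) * r ^ (s-1) * (1/(2*r) * 2) with hD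
    have h2t : HasDerivAt (fun t : ℝ => 2 * t) 2 n := by
      simpa using (hasDerivAt_id n).const_mul (2:ℝ)
    have hsq : HasDerivAt Real.sqrt (1/(2*r)) (2*n) := Real.hasDerivAt_sqrt (by linarith)
    have hcomp : HasDerivAt (fun t => Real.sqrt (2*t)) (1/(2*r) * 2) n := hsq.comp n h2t
    have hgderiv : HasDerivAt g D n := hcomp.pow s
    have hslope := hasDerivAt_iff_tendsto_slope.1 hgderiv
    have hplus : Filter.Tendsto (fun ε : ℝ => n + ε) (nhdsWithin 0 (Set.Ioi 0))
        (nhdsWithin n {n}ᶜ) := by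
      apply tendsto_nhdsWithin_of_tendsto_nhds_of_eventually_within
      · have : Filter.Tendsto (fun ε : ℝ => n + ε) (nhds 0) (nhds n) := by
          exact (continuous_add_left n).tendsto' 0 n (by simp)
        exact this.mono_left nhdsWithin_le_nhds
      · filter_upwards [self_mem_nhdsWithin] with ε hε
        simp only [Set.mem_compl_iff, Set.mem_singleton_iff]
        have : (0:ℝ) < ε := hε
        intro h; linarith [h]
    have hminus : Filter.Tendsto (fun ε : ℝ => n - ε) (nhdsWithin 0 (Set.Ioi 0))
        (nhdsWithin n {n}ᶜ) := by
      apply tendsto_nhdsWithin_of_tendsto_nhds_of_eventually_within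
      · have : Filter.Tendsto (fun ε : ℝ => n - ε) (nhds 0) (nhds n) := by
          exact (continuous_sub_left n).tendsto' 0 n (by simp)
        exact this.mono_left nhdsWithin_le_nhds
      · filter_upwards [self_mem_nhdsWithin] with ε hε
        simp only [Set.mem_compl_iff, Set.mem_singleton_iff]
        have : (0:ℝ) < ε := hε
        intro h; linarith [h]
    have T1 := hslope.comp hplus
    have T2 := hslope.comp hminus
    have T3 : Filter.Tendsto
        (fun ε : ℝ => (S.det⁻¹ * ω * c) * ((g (n + ε) - g (n - ε)) / (2 * ε)))
        (nhdsWithin 0 (Set.Ioi 0)) (nhds ((S.det⁻¹ * ω * c) * D)) := by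
      have h4 := ((T1.add T2).div_const 2).const_mul (S.det⁻¹ * ω * c)
      have h5 : (S.det⁻¹ * ω * c) * ((D + D) / 2) = (S.det⁻¹ * ω * c) * D := by ring
      rw [h5] at h4
      apply h4.congr'
      filter_upwards [self_mem_nhdsWithin] with ε hε
      have hε0 : (0:ℝ) < ε := hε
      simp only [Function.comp_apply, slope_def_field]
      have e1 : n + ε - n = ε := by ring
      have e2 : n - ε - n = -ε := by ring
      rw [e1, e2]
      have hne : ε ≠ 0 := hε0.ne'
      have h6 : (g (n+ε) - g n)/ε + (g (n-ε) - g n)/(-ε) = (g (n+ε) - g (n-ε))/ε := by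
        rw [div_neg, ← sub_eq_add_neg, ← sub_div]
        congr 1
        ring
      rw [h6, div_div, mul_comm ε 2]
    -- limit value equals the stated constant
    have hval : (S.det⁻¹ * ω * c) * D
        = c * (2 * Real.pi) ^ ((s : ℝ) / 2) /
          (Real.Gamma ((s : ℝ) / 2) * Real.sqrt A.det) * n ^ ((s : ℝ) / 2 - 1) := by
      have hrs : r ^ s = r ^ (s-1) * r := by
        rw [← pow_succ, Nat.sub_add_cancel hs]
      have hr2 : r * r = 2 * n := Real.mul_self_sqrt (by linarith)
      have hpis : Real.sqrt Real.pi ^ s = Real.pi ^ ((s:ℝ)/2) := by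
        rw [Real.sqrt_eq_rpow, ← Real.rpow_natCast (Real.pi ^ ((1:ℝ)/2)) s,
          ← Real.rpow_mul Real.pi_pos.le]
        congr 1; ring
      have hrsn : r ^ s = (2*n) ^ ((s:ℝ)/2) := by
        rw [hr, Real.sqrt_eq_rpow, ← Real.rpow_natCast ((2*n) ^ ((1:ℝ)/2)) s,
          ← Real.rpow_mul (by linarith)]
        congr 1; ring
      have h2pi : (2 * Real.pi) ^ ((s:ℝ)/2)
          = (2:ℝ) ^ ((s:ℝ)/2) * Real.pi ^ ((s:ℝ)/2) :=
        Real.mul_rpow (by norm_num) Real.pi_pos.le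
      have h2n : (2*n) ^ ((s:ℝ)/2) = (2:ℝ) ^ ((s:ℝ)/2) * n ^ ((s:ℝ)/2) :=
        Real.mul_rpow (by norm_num) hn.le
      have hnp : n ^ ((s:ℝ)/2 - 1) = n ^ ((s:ℝ)/2) / n := by
        rw [Real.rpow_sub hn, Real.rpow_one]
      have hΓ : Real.Gamma ((s:ℝ)/2 + 1) = ((s:ℝ)/2) * Real.Gamma ((s:ℝ)/2) :=
        Real.Gamma_add_one (by positivity)
      have hΓpos : 0 < Real.Gamma ((s:ℝ)/2) := Real.Gamma_pos_of_pos (by positivity)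
      have hDval : D = (s:ℝ) * r ^ s / (2*n) := by
        rw [hD, hrs, ← hr2]
        field_simp
      rw [hDval, hω, hΓ, hpis, hrsn, hsqrtdet, h2pi, h2n, hnp]
      have hs0 : ((s:ℝ)) ≠ 0 := Nat.cast_ne_zero.2 hs'
      field_simp
    rw [← hval]
    apply T3.congr'
    filter_upwards [hmem] with ε hε
    exact (hfun ε hε).symm
end

section
/- Let F be a positive definite real quadratic form in s variables, n > 0, 0 < ε < n, and let λ_s be the smallest eigenvalue of the Hessian of F. If m ∈ R^s satisfies |F(m) - n| < ε, then the point v = √(n/F(m))·m satisfies F(v) = n and ‖m - v‖ < (ε/(n-ε))·√((n+ε)/(2λ_s)). -/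
open scoped BigOperators
open Matrix

lemma smallest_eig_bound (s : ℕ) (A : Matrix (Fin s) (Fin s) ℝ) (hA : A.PosDef) (lams : ℝ)
    (hlams : IsLeast (Set.range hA.1.eigenvalues) lams) (m : Fin s → ℝ) :
    lams * (m ⬝ᵥ m) ≤ m ⬝ᵥ A.mulVec m := by
  have hspec := hA.1.spectral_theorem
  set U : Matrix (Fin s) (Fin s) ℝ := (hA.1.eigenvectorUnitary : Matrix (Fin s) (Fin s) ℝ) with hU
  have hUU : U * star U = 1 := (Unitary.mem_iff.mp hA.1.eigenvectorUnitary.2).2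
  set y : Fin s → ℝ := m ᵥ* U with hy
  have hstar : star U *ᵥ m = y := by
    rw [hy, Matrix.star_eq_conjTranspose, Matrix.conjTranspose_eq_transpose_of_trivial,
      Matrix.mulVec_transpose]
  have h1 : m ⬝ᵥ A.mulVec m = ∑ i, hA.1.eigenvalues i * y i ^ 2 := by
    conv_lhs => rw [hspec, Unitary.conjStarAlgAut_apply, ← hU]
    rw [← Matrix.mulVec_mulVec, ← Matrix.mulVec_mulVec, Matrix.dotProduct_mulVec, ← hy, hstar]
    simp [dotProduct, Matrix.mulVec_diagonal, sq]
    apply Finset.sum_congr rfl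
    intro i _
    ring
  have h2 : m ⬝ᵥ m = ∑ i, y i ^ 2 := by
    have : m ⬝ᵥ m = m ⬝ᵥ ((U * star U) *ᵥ m) := by rw [hUU, Matrix.one_mulVec]
    rw [this, ← Matrix.mulVec_mulVec, Matrix.dotProduct_mulVec, hstar]
    simp [dotProduct, hy, sq]
  rw [h1, h2, Finset.mul_sum]
  apply Finset.sum_le_sum
  intro i _
  exact mul_le_mul_of_nonneg_right (hlams.2 ⟨i, rfl⟩) (sq_nonneg _)

lemma key_real_ineq (n ε F lams S t r u w : ℝ) (hn : 0 < n) (hε0 : 0 < ε) (hεn : ε < n)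
    (hF1 : n - ε < F) (hF2 : F < n + ε) (hlpos : 0 < lams)
    (hr2 : r ^ 2 = F) (hu2 : u ^ 2 = n) (hw2 : w ^ 2 = n - ε)
    (hr : 0 < r) (hwr : w < r) (hwu : w < u) (hw : 0 < w)
    (htr : t * r = u) (hS0 : 0 ≤ S) (heig : lams * S ≤ 2 * F) :
    (1 - t) ^ 2 * S < (ε / (n - ε)) ^ 2 * ((n + ε) / (2 * lams)) := by
  have hFt : (1 - t) ^ 2 * F = (r - u) ^ 2 := by
    calc (1 - t) ^ 2 * F = (1 - t) ^ 2 * r ^ 2 := by rw [hr2]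
      _ = (r - t * r) ^ 2 := by ring
      _ = (r - u) ^ 2 := by rw [htr]
  have hkey : 2 * (r - u) ^ 2 * (2 * (n - ε) ^ 2) < ε ^ 2 * (n + ε) := by
    have hFn : (F - n) ^ 2 < ε ^ 2 := sq_lt_sq' (by linarith) (by linarith)
    have hru : (r - u) * (r + u) = F - n := by linear_combination hr2 - hu2
    have h4 : 4 * (n - ε) ≤ (r + u) ^ 2 := by nlinarith [sq_nonneg (r + u - 2 * w)]
    have h5 : (r - u) ^ 2 * (4 * (n - ε)) < ε ^ 2 := by
      nlinarith [mul_le_mul_of_nonneg_left h4 (sq_nonneg (r - u))]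
    have h6 : (r - u) ^ 2 * (4 * (n - ε)) * (n - ε) < ε ^ 2 * (n - ε) :=
      mul_lt_mul_of_pos_right h5 (by linarith)
    nlinarith [sq_nonneg ε]
  have h1 : (1 - t) ^ 2 * S ≤ 2 * (r - u) ^ 2 / lams := by
    rw [le_div_iff₀ hlpos]
    nlinarith [mul_le_mul_of_nonneg_left heig (sq_nonneg (1 - t))]
  have h2 : 2 * (r - u) ^ 2 / lams < (ε ^ 2 * (n + ε) / (2 * (n - ε) ^ 2)) / lams := by
    gcongr
    rw [lt_div_iff₀ (mul_pos two_pos (pow_pos (by linarith) 2))]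
    linarith [hkey]
  have h3 : (ε / (n - ε)) ^ 2 * ((n + ε) / (2 * lams))
      = (ε ^ 2 * (n + ε) / (2 * (n - ε) ^ 2)) / lams := by
    have hne : n - ε ≠ 0 := by linarith
    field_simp
  rw [h3]
  linarith

/-- If `F(x) = (1/2)xᵀAx` is positive definite with smallest eigenvalue `λₛ`, `0 < ε < n`, and
`|F(m) - n| < ε`, then `v = √(n/F(m))·m` satisfies `F(v) = n` and
`‖m - v‖ < (ε/(n-ε)) √((n+ε)/(2λₛ))`. -/
theorem rescaled_point_close (s : ℕ) (A : Matrix (Fin s) (Fin s) ℝ) (hA : A.PosDef)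
    (lams : ℝ) (hlams : IsLeast (Set.range hA.1.eigenvalues) lams)
    (n ε : ℝ) (hn : 0 < n) (hε0 : 0 < ε) (hεn : ε < n)
    (m : Fin s → ℝ) (hm : |(1 / 2) * (m ⬝ᵥ A.mulVec m) - n| < ε) :
    (1 / 2) * ((fun i => Real.sqrt (n / ((1 / 2) * (m ⬝ᵥ A.mulVec m))) * m i) ⬝ᵥ
        A.mulVec (fun i => Real.sqrt (n / ((1 / 2) * (m ⬝ᵥ A.mulVec m))) * m i)) = n ∧
      Real.sqrt (∑ i, (m i - Real.sqrt (n / ((1 / 2) * (m ⬝ᵥ A.mulVec m))) * m i) ^ 2)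
        < (ε / (n - ε)) * Real.sqrt ((n + ε) / (2 * lams)) := by
  have heig := smallest_eig_bound s A hA lams hlams m
  set F : ℝ := (1 / 2) * (m ⬝ᵥ A.mulVec m) with hFdef
  obtain ⟨hF1, hF2⟩ := abs_lt.mp hm
  have hFpos : 0 < F := by linarith
  have hlpos : 0 < lams := by
    obtain ⟨i, hi⟩ := hlams.1
    rw [← hi]; exact hA.eigenvalues_pos i
  set t : ℝ := Real.sqrt (n / F) with htdef
  have ht0 : 0 ≤ t := Real.sqrt_nonneg _
  have ht2 : t ^ 2 = n / F := Real.sq_sqrt (by positivity)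
  set S : ℝ := m ⬝ᵥ m with hSdef
  have hS0 : 0 ≤ S := by
    rw [hSdef, dotProduct]
    exact Finset.sum_nonneg fun i _ => mul_self_nonneg _
  constructor
  · have hsmul : (fun i => t * m i) = t • m := rfl
    rw [hsmul, smul_dotProduct, Matrix.mulVec_smul, dotProduct_smul,
      smul_eq_mul, smul_eq_mul]
    have h : (1:ℝ)/2 * (t * (t * (m ⬝ᵥ A.mulVec m))) = t ^ 2 * F := by rw [hFdef]; ring
    rw [h, ht2, div_mul_cancel₀ _ (ne_of_gt hFpos)]
  · set r : ℝ := Real.sqrt F with hrdef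
    set u : ℝ := Real.sqrt n with hudef
    set w : ℝ := Real.sqrt (n - ε) with hwdef
    have hr2 : r ^ 2 = F := Real.sq_sqrt hFpos.le
    have hu2 : u ^ 2 = n := Real.sq_sqrt hn.le
    have hw2 : w ^ 2 = n - ε := Real.sq_sqrt (by linarith)
    have hr : 0 < r := Real.sqrt_pos.mpr hFpos
    have hu : 0 < u := Real.sqrt_pos.mpr hn
    have hw : 0 < w := Real.sqrt_pos.mpr (by linarith)
    have hwr : w < r := Real.sqrt_lt_sqrt (by linarith) (by linarith)
    have hwu : w < u := Real.sqrt_lt_sqrt (by linarith) (by linarith)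
    have htr : t * r = u := by
      rw [htdef, hrdef, hudef, Real.sqrt_div hn.le, div_mul_cancel₀]
      exact ne_of_gt hr
    have hRHSpos : 0 < (ε / (n - ε)) * Real.sqrt ((n + ε) / (2 * lams)) := by
      apply mul_pos (div_pos hε0 (by linarith))
      exact Real.sqrt_pos.mpr (by positivity)
    rw [Real.sqrt_lt' hRHSpos]
    have hsum : ∑ i, (m i - t * m i) ^ 2 = (1 - t) ^ 2 * S := by
      rw [hSdef, dotProduct, Finset.mul_sum]
      exact Finset.sum_congr rfl fun i _ => by ring
    have hRHSsq : ((ε / (n - ε)) * Real.sqrt ((n + ε) / (2 * lams))) ^ 2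
        = (ε / (n - ε)) ^ 2 * ((n + ε) / (2 * lams)) := by
      rw [mul_pow, Real.sq_sqrt (by positivity)]
    rw [hsum, hRHSsq]
    have h2F : m ⬝ᵥ A.mulVec m = 2 * F := by rw [hFdef]; ring
    rw [h2F] at heig
    exact key_real_ineq n ε F lams S t r u w hn hε0 hεn (by linarith) (by linarith) hlpos
      hr2 hu2 hw2 hr hwr hwu hw htr hS0 heig
end

section
/- Let f: R → C be a 1-periodic function that is continuous and satisfies conj(f(x)) = f(-x) for all x ∈ R. Then for any Q ≥ 1, ∫₀¹ f(x) dx = 2·Re( Σ_{1 ≤ q ≤ Q} Σ_{Q < d ≤ q+Q, gcd(d,q)=1} ∫₀^{1/(qd)} f(x - d̄/q) dx ), where d̄ denotes an integer with d·d̄ ≡ 1 (mod q). -/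
open scoped BigOperators
open Complex

noncomputable def KFI (f : ℝ → ℂ) (q : ℕ) (d : ℤ) : ℝ :=
  (∫ x in (0:ℝ)..(1 / ((q:ℝ) * (d:ℝ))), f (x - (((d : ZMod q)⁻¹).val : ℝ) / (q:ℝ))).re

lemma per_shift {f : ℝ → ℂ} (hper : Function.Periodic f 1) (a b : ℝ) (k : ℤ) :
    (∫ x in (a + k)..(b + k), f x) = ∫ x in a..b, f x := by
  rw [← intervalIntegral.integral_comp_add_right]
  refine intervalIntegral.integral_congr fun x _ => ?_
  simpa using (hper.int_mul k) x

lemma interval_conj {f : ℝ → ℂ} (a b : ℝ) :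
    (∫ x in a..b, (starRingEnd ℂ) (f x)) = (starRingEnd ℂ) (∫ x in a..b, f x) := by
  rw [intervalIntegral, intervalIntegral, integral_conj, integral_conj, map_sub]

lemma refl_re {f : ℝ → ℂ} (hconj : ∀ x : ℝ, (starRingEnd ℂ) (f x) = f (-x)) (a b : ℝ) :
    (∫ x in a..b, f x).re = (∫ x in (-b)..(-a), f x).re := by
  have h1 : (∫ x in (-b)..(-a), f x) = ∫ x in a..b, f (-x) :=
    (intervalIntegral.integral_comp_neg f).symm
  have h2 : (∫ x in a..b, f (-x)) = (starRingEnd ℂ) (∫ x in a..b, f x) := by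
    rw [← interval_conj]
    exact intervalIntegral.integral_congr fun x _ => (hconj x).symm
  rw [h1, h2, Complex.conj_re]

lemma KFI_eq (f : ℝ → ℂ) (q : ℕ) (d : ℤ) :
    KFI f q d = (∫ x in (-((((d : ZMod q)⁻¹).val : ℝ) / (q:ℝ)))..(
      -((((d : ZMod q)⁻¹).val : ℝ) / (q:ℝ)) + 1 / ((q:ℝ) * (d:ℝ))), f x).re := by
  rw [KFI, intervalIntegral.integral_comp_sub_right]
  ring_nf

lemma inv_mul_dvd (q n : ℕ) (hg : Nat.Coprime n q) :
    (q:ℤ) ∣ (((n : ZMod q))⁻¹.val : ℤ) * n - 1 := by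
  rcases Nat.eq_zero_or_pos q with rfl | hq
  · obtain rfl := (Nat.coprime_zero_right n).1 hg
    simp
  have : NeZero q := ⟨hq.ne'⟩
  have h1 : ((n : ZMod q))⁻¹ * n = 1 :=
    ZMod.inv_mul_of_unit _ ((ZMod.isUnit_iff_coprime n q).2 hg)
  rw [← ZMod.intCast_zmod_eq_zero_iff_dvd]
  push_cast
  simp [ZMod.natCast_val, ZMod.cast_id, h1]

lemma KFI_split {f : ℝ → ℂ} (hper : Function.Periodic f 1) (hcont : Continuous f)
    (hconj : ∀ x : ℝ, (starRingEnd ℂ) (f x) = f (-x)) (q N : ℕ) (hq : 1 ≤ q)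
    (hg : Nat.Coprime q (N+1)) :
    KFI f q ((N:ℤ)+1) = KFI f q ((q:ℤ)+N+1) + KFI f (N+1) ((N:ℤ)+1+q) := by
  have hq0 : (0:ℝ) < (q:ℝ) := by exact_mod_cast hq
  have hn0 : (0:ℝ) < (N:ℝ)+1 := by positivity
  -- identify the ZMod casts
  have hc1 : (((N:ℤ)+1 : ℤ) : ZMod q) = ((N+1 : ℕ) : ZMod q) := by push_cast; ring
  have hc2 : (((q:ℤ)+N+1 : ℤ) : ZMod q) = ((N+1 : ℕ) : ZMod q) := by
    push_cast; simp [ZMod.natCast_self]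
  have hc3 : (((N:ℤ)+1+q : ℤ) : ZMod (N+1)) = ((N+1+q : ℕ) : ZMod (N+1)) := by push_cast; ring
  set b : ℕ := ((N+1 : ℕ) : ZMod q)⁻¹.val with hbdef
  set e : ℕ := ((N+1+q : ℕ) : ZMod (N+1))⁻¹.val with hedef
  -- congruences
  obtain ⟨m, hm⟩ : (q:ℤ) ∣ (b:ℤ)*(N+1) - 1 := inv_mul_dvd q (N+1) hg.symm
  have hgq : Nat.Coprime (N+1+q) (N+1) := by
    rw [add_comm (N+1) q]
    exact Nat.coprime_add_self_left.2 hg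
  have he : ((N+1:ℕ):ℤ) ∣ (e:ℤ)*(N+1+q) - 1 := inv_mul_dvd (N+1) (N+1+q) hgq
  have he' : ((N:ℤ)+1) ∣ (e:ℤ)*q - 1 := by
    have h2 : (e:ℤ)*q - 1 = ((e:ℤ)*(N+1+q) - 1) - (N+1)*e := by push_cast; ring
    rw [h2]
    exact dvd_sub (by exact_mod_cast he) (Dvd.intro e rfl)
  have hmq : ((N:ℤ)+1) ∣ (m+e)*q := by
    have h4 : (m+e)*q = (N+1)*b + ((e:ℤ)*q - 1) := by linear_combination -hm
    rw [h4]
    exact dvd_add (Dvd.intro b rfl) he'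
  have hcop : IsCoprime ((N:ℤ)+1) (q:ℤ) := by
    rw [Int.isCoprime_iff_gcd_eq_one]
    have : Nat.gcd (N+1) q = 1 := hg.symm
    have e : ((N:ℤ)+1) = ((N+1:ℕ):ℤ) := by push_cast; ring
    rw [e, Int.gcd_natCast_natCast]; exact this
  obtain ⟨k, hk⟩ := hcop.dvd_of_dvd_mul_right hmq
  -- real abbreviations
  have hmR : (b:ℝ)*((N:ℝ)+1) - 1 = (q:ℝ)*(m:ℝ) := by exact_mod_cast hm
  have hkR : (m:ℝ) + (e:ℝ) = ((N:ℝ)+1)*(k:ℝ) := by exact_mod_cast hk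
  -- rewrite the three KFI terms
  rw [KFI_eq, KFI_eq, KFI_eq, hc1, hc2, hc3, ← hbdef, ← hedef]
  push_cast
  set c : ℝ := -((b:ℝ)/(q:ℝ)) with hc
  set L1 : ℝ := 1/((q:ℝ)*((N:ℝ)+1)) with hL1
  set L2 : ℝ := 1/((q:ℝ)*((q:ℝ)+(N:ℝ)+1)) with hL2
  set L3 : ℝ := 1/(((N:ℝ)+1)*((N:ℝ)+1+(q:ℝ))) with hL3
  have hsplit : (∫ x in c..(c + L1), f x) =
      (∫ x in c..(c + L2), f x) + ∫ x in (c + L2)..(c + L1), f x :=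
    (intervalIntegral.integral_add_adjacent_intervals (hcont.intervalIntegrable _ _)
      (hcont.intervalIntegrable _ _)).symm
  have key1 : -(c + L1) = (m:ℝ)/((N:ℝ)+1) := by
    rw [hc, hL1]; field_simp; linear_combination hmR
  have key2 : -(c + L2) = (m:ℝ)/((N:ℝ)+1) + L3 := by
    rw [hc, hL2, hL3]; field_simp
    linear_combination ((N:ℝ)+1+(q:ℝ))^2 * hmR
  have hshift : (∫ x in ((m:ℝ)/((N:ℝ)+1))..((m:ℝ)/((N:ℝ)+1) + L3), f x) =
      ∫ x in (-((e:ℝ)/((N:ℝ)+1)))..(-((e:ℝ)/((N:ℝ)+1)) + L3), f x := by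
    have h := per_shift hper (-((e:ℝ)/((N:ℝ)+1))) (-((e:ℝ)/((N:ℝ)+1)) + L3) k
    rw [← h]; congr 1
    · field_simp; linear_combination hkR
    · field_simp; linear_combination hkR
  have hre : (∫ x in (c + L2)..(c + L1), f x).re =
      (∫ x in (-((e:ℝ)/((N:ℝ)+1)))..(-((e:ℝ)/((N:ℝ)+1)) + L3), f x).re := by
    rw [refl_re hconj, key1, key2, hshift]
  rw [hsplit, Complex.add_re, hre]

noncomputable def KFS (f : ℝ → ℂ) (N : ℕ) : ℝ :=
  ∑ q ∈ Finset.Icc 1 N,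
    ∑ d ∈ (Finset.Ioc (N:ℤ) ((q:ℤ)+N)).filter (fun d => Int.gcd d (q:ℤ) = 1), KFI f q d

lemma KFS_stable {f : ℝ → ℂ} (hper : Function.Periodic f 1) (hcont : Continuous f)
    (hconj : ∀ x : ℝ, (starRingEnd ℂ) (f x) = f (-x)) (N : ℕ) (hN : 1 ≤ N) :
    KFS f N = KFS f (N+1) := by
  classical
  have hgcd : ∀ q : ℕ, Int.gcd ((q:ℤ)+N+1) (q:ℤ) = Int.gcd ((N:ℤ)+1) (q:ℤ) := by
    intro q
    have e1 : (q:ℤ)+N+1 = ((N+1+q*1 : ℕ):ℤ) := by push_cast; ring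
    have e2 : (N:ℤ)+1 = ((N+1 : ℕ):ℤ) := by push_cast; ring
    rw [e1, e2, Int.gcd_natCast_natCast, Int.gcd_natCast_natCast, Nat.gcd_add_mul_left_left]
  have hA : ∀ q ∈ Finset.Icc 1 N,
      (∑ d ∈ (Finset.Ioc (N:ℤ) ((q:ℤ)+N)).filter (fun d => Int.gcd d (q:ℤ) = 1), KFI f q d)
        = (if Int.gcd ((N:ℤ)+1) (q:ℤ) = 1 then KFI f q ((N:ℤ)+1) else 0)
          + ∑ d ∈ (Finset.Ioc ((N:ℤ)+1) ((q:ℤ)+N)).filter (fun d => Int.gcd d (q:ℤ) = 1),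
              KFI f q d := by
    intro q hq
    simp only [Finset.mem_Icc] at hq
    have h1 : (1:ℤ) ≤ (q:ℤ) := by exact_mod_cast hq.1
    have hIoc : Finset.Ioc (N:ℤ) ((q:ℤ)+N) = insert ((N:ℤ)+1) (Finset.Ioc ((N:ℤ)+1) ((q:ℤ)+N)) := by
      ext d; simp only [Finset.mem_Ioc, Finset.mem_insert]; omega
    rw [hIoc, Finset.filter_insert]
    split_ifs with h
    · rw [Finset.sum_insert (by simp only [Finset.mem_filter, Finset.mem_Ioc]; omega)]
    · rw [zero_add]
  have hB : ∀ q ∈ Finset.Icc 1 N,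
      (∑ d ∈ (Finset.Ioc ((N+1:ℕ):ℤ) ((q:ℤ)+(N+1:ℕ))).filter (fun d => Int.gcd d (q:ℤ) = 1),
          KFI f q d)
        = (if Int.gcd ((N:ℤ)+1) (q:ℤ) = 1 then KFI f q ((q:ℤ)+N+1) else 0)
          + ∑ d ∈ (Finset.Ioc ((N:ℤ)+1) ((q:ℤ)+N)).filter (fun d => Int.gcd d (q:ℤ) = 1),
              KFI f q d := by
    intro q hq
    simp only [Finset.mem_Icc] at hq
    have h1 : (1:ℤ) ≤ (q:ℤ) := by exact_mod_cast hq.1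
    have hcast : ((N+1:ℕ):ℤ) = (N:ℤ)+1 := by push_cast; ring
    have hcast2 : (q:ℤ)+((N+1:ℕ):ℤ) = (q:ℤ)+N+1 := by push_cast; ring
    have hIoc : Finset.Ioc ((N+1:ℕ):ℤ) ((q:ℤ)+(N+1:ℕ))
        = insert ((q:ℤ)+N+1) (Finset.Ioc ((N:ℤ)+1) ((q:ℤ)+N)) := by
      ext d
      simp only [Finset.mem_Ioc, Finset.mem_insert, hcast]
      push_cast
      omega
    rw [hIoc, Finset.filter_insert, hgcd q]
    split_ifs with h
    · rw [Finset.sum_insert (by simp only [Finset.mem_filter, Finset.mem_Ioc]; omega)]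
    · rw [zero_add]
  have hsplitif : ∀ q ∈ Finset.Icc 1 N,
      (if Int.gcd ((N:ℤ)+1) (q:ℤ) = 1 then KFI f q ((N:ℤ)+1) else 0)
        = (if Int.gcd ((N:ℤ)+1) (q:ℤ) = 1 then KFI f q ((q:ℤ)+N+1) else 0)
          + (if Int.gcd ((N:ℤ)+1) (q:ℤ) = 1 then KFI f (N+1) ((N:ℤ)+1+q) else 0) := by
    intro q hq
    simp only [Finset.mem_Icc] at hq
    split_ifs with h
    · have hcop : Nat.Coprime q (N+1) := by
        have e2 : (N:ℤ)+1 = ((N+1 : ℕ):ℤ) := by push_cast; ring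
        rw [e2, Int.gcd_natCast_natCast] at h
        exact (Nat.coprime_comm.mp h)
      exact KFI_split hper hcont hconj q N hq.1 hcop
    · rw [add_zero]
  -- the last row of KFS f (N+1)
  have hrow : (∑ d ∈ (Finset.Ioc ((N+1:ℕ):ℤ) (((N+1:ℕ):ℤ)+(N+1:ℕ))).filter
        (fun d => Int.gcd d ((N+1:ℕ):ℤ) = 1), KFI f (N+1) d)
      = ∑ q ∈ Finset.Icc 1 N,
          (if Int.gcd ((N:ℤ)+1) (q:ℤ) = 1 then KFI f (N+1) ((N:ℤ)+1+q) else 0) := by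
    rw [← Finset.sum_filter]
    refine (Finset.sum_nbij' (fun q : ℕ => (N:ℤ)+1+q) (fun d : ℤ => (d - (N+1)).toNat)
      ?_ ?_ ?_ ?_ ?_).symm
    · intro q hq
      simp only [Finset.mem_filter, Finset.mem_Icc] at hq
      obtain ⟨⟨hq1, hq2⟩, hq3⟩ := hq
      simp only [Finset.mem_filter, Finset.mem_Ioc]
      have h1 : (1:ℤ) ≤ (q:ℤ) := by exact_mod_cast hq1
      have h2 : (q:ℤ) ≤ (N:ℤ) := by exact_mod_cast hq2
      refine ⟨⟨by push_cast; omega, by push_cast; omega⟩, ?_⟩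
      have hde : (N:ℤ)+1+q = ((q + (N+1)*1 : ℕ):ℤ) := by push_cast; ring
      have e2 : ((N:ℤ)+1) = ((N+1:ℕ):ℤ) := by push_cast; ring
      rw [e2, Int.gcd_natCast_natCast] at hq3
      rw [hde, Int.gcd_natCast_natCast, Nat.gcd_add_mul_left_left]
      exact Nat.coprime_comm.mp hq3
    · intro d hd
      simp only [Finset.mem_filter, Finset.mem_Ioc] at hd
      obtain ⟨⟨hd1, hd2⟩, hd3⟩ := hd
      push_cast at hd1 hd2
      have hdtop : d ≤ 2*N+1 := by
        by_contra hcon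
        have hde : d = ((2*(N+1) : ℕ):ℤ) := by push_cast; omega
        rw [hde, Int.gcd_natCast_natCast] at hd3
        have hg2 : Nat.gcd (2*(N+1)) (N+1) = N+1 := by
          rw [Nat.gcd_comm]; exact Nat.gcd_eq_left ⟨2, by ring⟩
        omega
      simp only [Finset.mem_filter, Finset.mem_Icc]
      refine ⟨⟨by omega, by omega⟩, ?_⟩
      have hde : d = (((d - (N+1)).toNat + (N+1)*1 : ℕ):ℤ) := by push_cast; omega
      rw [hde, Int.gcd_natCast_natCast, Nat.gcd_add_mul_left_left] at hd3
      have e2 : ((N:ℤ)+1) = ((N+1 : ℕ):ℤ) := by push_cast; ring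
      rw [e2, Int.gcd_natCast_natCast]
      exact Nat.coprime_comm.mp hd3
    · intro q hq
      show (((N:ℤ)+1+q) - (N+1)).toNat = q
      omega
    · intro d hd
      simp only [Finset.mem_filter, Finset.mem_Ioc] at hd
      obtain ⟨⟨hd1, hd2⟩, _⟩ := hd
      push_cast at hd1 hd2
      show (N:ℤ)+1+(((d - (N+1)).toNat : ℕ):ℤ) = d
      omega
    · intro q hq
      rfl
  -- assemble
  rw [KFS, KFS, Finset.sum_Icc_succ_top (by omega : 1 ≤ N+1)]
  rw [Finset.sum_congr rfl hA, Finset.sum_congr rfl hB, Finset.sum_add_distrib,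
    Finset.sum_add_distrib, Finset.sum_congr rfl hsplitif, Finset.sum_add_distrib, hrow]
  push_cast
  ring

lemma KFS_base {f : ℝ → ℂ} (hper : Function.Periodic f 1) (hcont : Continuous f)
    (hconj : ∀ x : ℝ, (starRingEnd ℂ) (f x) = f (-x)) :
    (∫ x in (0:ℝ)..1, f x).re = 2 * KFS f 1 := by
  have h1 : KFS f 1 = (∫ x in (0:ℝ)..(1/2), f x).re := by
    rw [KFS]
    rw [show Finset.Icc 1 1 = {1} from rfl, Finset.sum_singleton]
    have hIoc : Finset.Ioc ((1:ℕ):ℤ) (((1:ℕ):ℤ)+(1:ℕ)) = {2} := by decide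
    rw [hIoc]
    have : ({2} : Finset ℤ).filter (fun d => Int.gcd d ((1:ℕ):ℤ) = 1) = {2} := by decide
    rw [this, Finset.sum_singleton, KFI]
    have hv : (((2:ℤ) : ZMod 1)⁻¹).val = 0 := by
      have : Subsingleton (ZMod 1) := by infer_instance
      exact Nat.lt_one_iff.mp (ZMod.val_lt _)
    rw [hv]
    norm_num
  have hsplit : (∫ x in (0:ℝ)..1, f x) =
      (∫ x in (0:ℝ)..(1/2), f x) + ∫ x in (1/2:ℝ)..1, f x :=
    (intervalIntegral.integral_add_adjacent_intervals (hcont.intervalIntegrable _ _)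
      (hcont.intervalIntegrable _ _)).symm
  have hs : (∫ x in (1/2:ℝ)..1, f x) = ∫ x in (-(1/2):ℝ)..0, f x := by
    have h := per_shift hper (-(1/2):ℝ) 0 1
    rw [← h]; norm_num
  have hr : (∫ x in (-(1/2):ℝ)..0, f x).re = (∫ x in (0:ℝ)..(1/2), f x).re := by
    have := refl_re hconj (0:ℝ) (1/2)
    simpa using this.symm
  rw [hsplit, Complex.add_re, hs, hr, h1]
  ring

lemma KFS_val {f : ℝ → ℂ} (hper : Function.Periodic f 1) (hcont : Continuous f)
    (hconj : ∀ x : ℝ, (starRingEnd ℂ) (f x) = f (-x)) (N : ℕ) (hN : 1 ≤ N) :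
    (∫ x in (0:ℝ)..1, f x).re = 2 * KFS f N := by
  induction N, hN using Nat.le_induction with
  | base => exact KFS_base hper hcont hconj
  | succ n hn ih => rw [← KFS_stable hper hcont hconj n hn]; exact ih

lemma integral_self_conj {f : ℝ → ℂ} (hper : Function.Periodic f 1)
    (hconj : ∀ x : ℝ, (starRingEnd ℂ) (f x) = f (-x)) :
    (∫ x in (0:ℝ)..1, f x) = (((∫ x in (0:ℝ)..1, f x).re : ℝ) : ℂ) := by
  have h : (starRingEnd ℂ) (∫ x in (0:ℝ)..1, f x) = ∫ x in (0:ℝ)..1, f x := by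
    rw [← interval_conj]
    have h2 : (∫ x in (0:ℝ)..1, (starRingEnd ℂ) (f x)) = ∫ x in (0:ℝ)..1, f (-x) :=
      intervalIntegral.integral_congr fun x _ => hconj x
    rw [h2, intervalIntegral.integral_comp_neg]
    have h3 := per_shift hper (-1:ℝ) 0 1
    norm_num at h3 ⊢
    exact h3.symm
  exact (Complex.conj_eq_iff_re.mp h).symm

/-- The Kloosterman-style Farey dissection identity: for a continuous 1-periodic `f : ℝ → ℂ`
with `conj (f x) = f (-x)` and any `Q ≥ 1`,
`∫₀¹ f = 2 Re ( Σ_{1 ≤ q ≤ Q} Σ_{Q < d ≤ q+Q, gcd(d,q)=1} ∫₀^{1/(qd)} f(x - d̄/q) dx )`,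
where `d̄` is the inverse of `d` modulo `q`. -/
theorem kloosterman_farey_identity (f : ℝ → ℂ) (hper : Function.Periodic f 1)
    (hcont : Continuous f) (hconj : ∀ x : ℝ, (starRingEnd ℂ) (f x) = f (-x))
    (Q : ℝ) (hQ : 1 ≤ Q) :
    (∫ x in (0 : ℝ)..1, f x) =
      2 * ((∑ q ∈ Finset.Icc 1 ⌊Q⌋₊,
        ∑ d ∈ (Finset.Ioc ⌊Q⌋ ⌊(q : ℝ) + Q⌋).filter (fun d => Int.gcd d q = 1),
          ∫ x in (0 : ℝ)..(1 / ((q : ℝ) * (d : ℝ))),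
            f (x - (((d : ZMod q)⁻¹).val : ℝ) / (q : ℝ))).re : ℂ) := by
  set N := ⌊Q⌋₊ with hNdef
  have hN : 1 ≤ N := Nat.le_floor (by exact_mod_cast hQ)
  have hfloor : ⌊Q⌋ = (N : ℤ) := (Int.natCast_floor_eq_floor (by linarith)).symm
  have hsum : (∑ q ∈ Finset.Icc 1 N, ∑ d ∈ (Finset.Ioc ⌊Q⌋ ⌊(q:ℝ) + Q⌋).filter
        (fun d => Int.gcd d q = 1), ∫ x in (0:ℝ)..(1/((q:ℝ)*(d:ℝ))),
          f (x - (((d : ZMod q)⁻¹).val : ℝ)/(q:ℝ))).re = KFS f N := by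
    rw [Complex.re_sum, KFS]
    refine Finset.sum_congr rfl fun q hq => ?_
    rw [Complex.re_sum]
    refine Finset.sum_congr ?_ fun d hd => rfl
    congr 1
    rw [add_comm ((q:ℝ)) Q, Int.floor_add_natCast, hfloor, add_comm]
  rw [integral_self_conj hper hconj, hsum, KFS_val hper hcont hconj N hN]
  push_cast
  ring
end
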